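/- arXiv:1205.2996 — 6 statements merged into one kernel-verified Lean document; each statement's English description precedes it below -/
import Mathlib

section
/- For any regular binary game, any probability measure P on Σ^∞, and any positive natural numbers m and n, the generalized entropies satisfy the chain rule H_{m+n} = H_m + H_{n|m}. -/
open MeasureTheory ENNReal Filter Topology

noncomputable section

/-- A regular binary game `(Σ, Γ, λ)` with `Σ = {0,1}` (encoded as `Bool`, bit `0 = false`),
prediction space `Γ = [0,1]` and loss function `λ : Σ × [0,1] → [0,∞]` that is continuous,
convex in the prediction, and admits a prediction of finite loss on both outcomes. -/
structure RegularGame where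
  loss : Bool → ℝ → ℝ≥0∞
  continuousOn : ∀ b, ContinuousOn (loss b) (Set.Icc 0 1)
  convex : ∀ b : Bool, ∀ γ₁ ∈ Set.Icc (0:ℝ) 1, ∀ γ₂ ∈ Set.Icc (0:ℝ) 1,
      ∀ t ∈ Set.Icc (0:ℝ) 1,
      loss b (t * γ₁ + (1 - t) * γ₂)
        ≤ ENNReal.ofReal t * loss b γ₁ + ENNReal.ofReal (1 - t) * loss b γ₂
  finite_pred : ∃ γ ∈ Set.Icc (0:ℝ) 1, loss false γ < ⊤ ∧ loss true γ < ⊤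

/-- A prediction strategy: for each history length `i`, a map from `i`-bit histories
to predictions in `[0,1]`. -/
def Strategy : Type := (i : ℕ) → (Fin i → Bool) → Set.Icc (0:ℝ) 1

/-- Cumulative loss of a strategy on the finite string `w`. -/
def strategyLoss (G : RegularGame) {n : ℕ} (w : Fin n → Bool) (S : Strategy) : ℝ≥0∞ :=
  ∑ i : Fin n, G.loss (w i)
    ((S i.val (fun j : Fin i.val => w ⟨j.val, j.isLt.trans i.isLt⟩) : Set.Icc (0:ℝ) 1) : ℝ)

/-- Cylinder set of the finite string `w` in `Σ^∞`. -/
def cyl {n : ℕ} (w : Fin n → Bool) : Set (ℕ → Bool) := {ω | ∀ i : Fin n, ω i.val = w i}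

/-- The `n`-step generalized entropy `H_n = inf_℘ Σ_{w ∈ Σ^n} P(w)·Loss(w,℘)`. -/
def Hn (G : RegularGame) (P : Measure (ℕ → Bool)) (n : ℕ) : ℝ≥0∞ :=
  ⨅ S : Strategy, ∑ w : Fin n → Bool, P (cyl w) * strategyLoss G w S

/-- The generalized conditional entropy
`H_{n|m} = inf_℘ Σ_{w∈Σ^m, x∈Σ^n} P(w·x) · Σ_{i<n} λ(x_i, ℘^{m+i}(w·x_0⋯x_{i−1}))`. -/
def Hcond (G : RegularGame) (P : Measure (ℕ → Bool)) (n m : ℕ) : ℝ≥0∞ :=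
  ⨅ S : Strategy, ∑ w : Fin m → Bool, ∑ x : Fin n → Bool,
    P (cyl (Fin.append w x)) *
      ∑ i : Fin n, G.loss (x i)
        ((S (m + i.val)
          (Fin.append w (fun j : Fin i.val => x ⟨j.val, j.isLt.trans i.isLt⟩)) : Set.Icc (0:ℝ) 1) : ℝ)

/-- The left shift on one-sided sequences. -/
def shiftN : (ℕ → Bool) → (ℕ → Bool) := fun ω n => ω (n + 1)

namespace ChainRuleAux

instance : Nonempty Strategy := ⟨fun _ _ => ⟨0, Set.left_mem_Icc.2 zero_le_one⟩⟩

variable {m n : ℕ}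

lemma append_apply_lt (u : Fin m → Bool) (x : Fin n → Bool) (j : Fin (m+n)) (h : j.val < m) :
    Fin.append u x j = u ⟨j.val, h⟩ :=
  Fin.append_left u x ⟨j.val, h⟩

lemma append_apply_ge (u : Fin m → Bool) (x : Fin n → Bool) (j : Fin (m+n)) (h : m ≤ j.val) :
    Fin.append u x j = x ⟨j.val - m, by have := j.isLt; omega⟩ := by
  have hj : j = Fin.natAdd m ⟨j.val - m, by have := j.isLt; omega⟩ := by
    apply Fin.ext
    simp only [Fin.natAdd_mk]
    omega
  conv_lhs => rw [hj]
  rw [Fin.append_right]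

lemma measurableSet_cyl {k : ℕ} (w : Fin k → Bool) : MeasurableSet (cyl w) := by
  have : cyl w = ⋂ i : Fin k, (fun ω : ℕ → Bool => ω i.val) ⁻¹' {w i} := by
    ext ω; simp [cyl, Set.mem_iInter]
  rw [this]
  exact MeasurableSet.iInter fun i => measurable_pi_apply i.val (measurableSet_singleton (w i))

lemma cyl_eq_iUnion (u : Fin m → Bool) :
    cyl u = ⋃ x : Fin n → Bool, cyl (Fin.append u x) := by
  ext ω
  simp only [cyl, Set.mem_setOf_eq, Set.mem_iUnion]
  constructor
  · intro hω
    refine ⟨fun i => ω (m + i.val), fun j => ?_⟩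
    rcases lt_or_ge j.val m with h | h
    · rw [append_apply_lt u _ j h]; exact hω ⟨j.val, h⟩
    · rw [append_apply_ge u _ j h]
      show ω j.val = ω (m + (j.val - m))
      exact congrArg ω (by omega)
  · rintro ⟨x, hx⟩ i
    have := hx (Fin.castAdd n i)
    rwa [Fin.append_left] at this

lemma sum_measure_append (P : Measure (ℕ → Bool)) (u : Fin m → Bool) :
    ∑ x : Fin n → Bool, P (cyl (Fin.append u x)) = P (cyl u) := by
  have hd : Pairwise (Function.onFun Disjoint fun x : Fin n → Bool => cyl (Fin.append u x)) := by
    intro x y hxy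
    simp only [Function.onFun, Set.disjoint_left]
    intro ω hx hy
    apply hxy
    funext i
    have h1 := hx (Fin.natAdd m i)
    have h2 := hy (Fin.natAdd m i)
    rw [Fin.append_right] at h1 h2
    exact h1.symm.trans h2
  have h1 : P (cyl u) = ∑' x : Fin n → Bool, P (cyl (Fin.append u x)) := by
    rw [cyl_eq_iUnion (n := n) u]
    exact measure_iUnion hd fun x => measurableSet_cyl _
  rw [h1, tsum_fintype]

def combine (m : ℕ) (S₁ S₂ : Strategy) : Strategy := fun i => if i < m then S₁ i else S₂ i

def condLoss (G : RegularGame) (m : ℕ) {n : ℕ} (u : Fin m → Bool) (x : Fin n → Bool)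
    (S : Strategy) : ℝ≥0∞ :=
  ∑ i : Fin n, G.loss (x i)
    ((S (m + i.val)
      (Fin.append u (fun j : Fin i.val => x ⟨j.val, j.isLt.trans i.isLt⟩)) : Set.Icc (0:ℝ) 1) : ℝ)

lemma strategyLoss_append (G : RegularGame) (u : Fin m → Bool) (x : Fin n → Bool) (S : Strategy) :
    strategyLoss G (Fin.append u x) S = strategyLoss G u S + condLoss G m u x S := by
  unfold strategyLoss condLoss
  rw [Fin.sum_univ_add]
  congr 1
  · refine Finset.sum_congr rfl fun i _ => ?_
    have h1 : Fin.append u x (Fin.castAdd n i) = u i := Fin.append_left u x i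
    have h2 : (fun j : Fin i.val =>
          Fin.append u x ⟨j.val, (j.isLt.trans i.isLt).trans_le (Nat.le_add_right m n)⟩)
        = fun j : Fin i.val => u ⟨j.val, j.isLt.trans i.isLt⟩ := by
      funext j
      exact append_apply_lt u x _ (j.isLt.trans i.isLt)
    exact congrArg₂ G.loss h1
      (congrArg (fun f => ((S i.val f : Set.Icc (0:ℝ) 1) : ℝ)) h2)
  · refine Finset.sum_congr rfl fun i _ => ?_
    have h1 : Fin.append u x (Fin.natAdd m i) = x i := Fin.append_right u x i
    have h2 : (fun j : Fin (m + i.val) =>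
          Fin.append u x ⟨j.val, by have h1 := j.isLt; have h2 := i.isLt; omega⟩)
        = Fin.append u (fun j : Fin i.val => x ⟨j.val, j.isLt.trans i.isLt⟩) := by
      funext j
      rcases lt_or_ge j.val m with h | h
      · rw [append_apply_lt u x _ h, append_apply_lt u _ j h]
      · rw [append_apply_ge u x _ h, append_apply_ge u _ j h]
    exact congrArg₂ G.loss h1
      (congrArg (fun f => ((S (m + i.val) f : Set.Icc (0:ℝ) 1) : ℝ)) h2)

lemma strategyLoss_combine (G : RegularGame) (u : Fin m → Bool) (S₁ S₂ : Strategy) :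
    strategyLoss G u (combine m S₁ S₂) = strategyLoss G u S₁ := by
  unfold strategyLoss combine
  refine Finset.sum_congr rfl fun i _ => ?_
  simp only [i.isLt, if_pos]

lemma condLoss_combine (G : RegularGame) (u : Fin m → Bool) (x : Fin n → Bool) (S₁ S₂ : Strategy) :
    condLoss G m u x (combine m S₁ S₂) = condLoss G m u x S₂ := by
  unfold condLoss combine
  refine Finset.sum_congr rfl fun i _ => ?_
  rw [if_neg (by omega)]

end ChainRuleAux

open ChainRuleAux

/-- **Chain rule for generalized entropy.** For any regular binary game, any probability
measure `P` on `Σ^∞`, and any positive natural numbers `m` and `n`,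
`H_{m+n} = H_m + H_{n|m}`. -/
theorem chain_rule_generalized_entropy
    (G : RegularGame) (P : Measure (ℕ → Bool)) [IsProbabilityMeasure P]
    (m n : ℕ) (hm : 1 ≤ m) (hn : 1 ≤ n) :
    Hn G P (m + n) = Hn G P m + Hcond G P n m := by
  classical
  set A : Strategy → ℝ≥0∞ := fun S => ∑ u : Fin m → Bool, P (cyl u) * strategyLoss G u S with hA
  set B : Strategy → ℝ≥0∞ := fun S => ∑ u : Fin m → Bool, ∑ x : Fin n → Bool,
      P (cyl (Fin.append u x)) * condLoss G m u x S with hB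
  have key : ∀ S : Strategy,
      ∑ w : Fin (m+n) → Bool, P (cyl w) * strategyLoss G w S = A S + B S := by
    intro S
    have e1 : ∑ w : Fin (m+n) → Bool, P (cyl w) * strategyLoss G w S
        = ∑ p : (Fin m → Bool) × (Fin n → Bool),
            P (cyl (Fin.append p.1 p.2)) * strategyLoss G (Fin.append p.1 p.2) S :=
      (Equiv.sum_comp (Fin.appendEquiv m n)
        (fun w => P (cyl w) * strategyLoss G w S)).symm
    rw [e1, Fintype.sum_prod_type]
    have e2 : ∀ (u : Fin m → Bool) (x : Fin n → Bool),
        P (cyl (Fin.append u x)) * strategyLoss G (Fin.append u x) S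
        = P (cyl (Fin.append u x)) * strategyLoss G u S
          + P (cyl (Fin.append u x)) * condLoss G m u x S := by
      intro u x
      rw [strategyLoss_append, mul_add]
    simp_rw [e2, Finset.sum_add_distrib]
    congr 1
    refine Finset.sum_congr rfl fun u _ => ?_
    rw [← Finset.sum_mul, sum_measure_append]
  have hH : Hn G P (m+n) = ⨅ S, (A S + B S) := iInf_congr key
  have hHm : Hn G P m = ⨅ S, A S := rfl
  have hHc : Hcond G P n m = ⨅ S, B S := rfl
  rw [hH, hHm, hHc]
  apply le_antisymm
  · rw [ENNReal.iInf_add]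
    refine le_iInf fun S₁ => ?_
    rw [ENNReal.add_iInf]
    refine le_iInf fun S₂ => ?_
    refine iInf_le_of_le (combine m S₁ S₂) (le_of_eq ?_)
    have hAc : A (combine m S₁ S₂) = A S₁ := by
      simp only [hA]
      exact Finset.sum_congr rfl fun u _ => by rw [strategyLoss_combine]
    have hBc : B (combine m S₁ S₂) = B S₂ := by
      simp only [hB]
      exact Finset.sum_congr rfl fun u _ => Finset.sum_congr rfl fun x _ => by
        rw [condLoss_combine]
    rw [hAc, hBc]
  · exact le_iInf fun S => add_le_add (iInf_le _ S) (iInf_le _ S)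
end
end

section
/- Generalized Shannon inequality: for any regular binary game and any stationary probability measure P on Σ^∞, and all natural numbers m ≥ 1 and n ≥ 0, the conditional generalized entropy satisfies H_{m|n} ≤ H_m. -/
open MeasureTheory ENNReal Filter Topology

noncomputable section

lemma measurable_shiftN : Measurable shiftN :=
  measurable_pi_lambda _ fun n => measurable_pi_apply (n + 1)

lemma measurableSet_cyl {n : ℕ} (w : Fin n → Bool) : MeasurableSet (cyl w) := by
  have h : cyl w = ⋂ i : Fin n, (fun ω : ℕ → Bool => ω i.val) ⁻¹' {w i} := by
    ext ω; simp [cyl]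
  rw [h]
  exact MeasurableSet.iInter fun i =>
    (measurable_pi_apply _) (measurableSet_singleton _)

lemma shiftN_iterate (n : ℕ) (ω : ℕ → Bool) (k : ℕ) :
    (shiftN^[n]) ω k = ω (k + n) := by
  induction n generalizing ω k with
  | zero => simp
  | succ n ih =>
    rw [Function.iterate_succ_apply, ih]
    show ω (k + n + 1) = ω (k + (n + 1))
    congr 1

lemma shift_iter_measure (P : Measure (ℕ → Bool)) (hstat : P.map shiftN = P)
    (n : ℕ) {s : Set (ℕ → Bool)} (hs : MeasurableSet s) :
    P ((shiftN^[n]) ⁻¹' s) = P s := by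
  induction n with
  | zero => simp
  | succ n ih =>
    rw [Function.iterate_succ, Set.preimage_comp]
    have hms : MeasurableSet ((shiftN^[n]) ⁻¹' s) := (measurable_shiftN.iterate n) hs
    rw [← Measure.map_apply measurable_shiftN hms, hstat, ih]

lemma sum_cyl_append (P : Measure (ℕ → Bool)) (hstat : P.map shiftN = P)
    {n m : ℕ} (x : Fin m → Bool) :
    ∑ w : Fin n → Bool, P (cyl (Fin.append w x)) = P (cyl x) := by
  have hU : (⋃ w : Fin n → Bool, cyl (Fin.append w x)) = (shiftN^[n]) ⁻¹' (cyl x) := by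
    ext ω
    simp only [Set.mem_iUnion, Set.mem_preimage, cyl, Set.mem_setOf_eq, shiftN_iterate]
    constructor
    · rintro ⟨w, hw⟩ i
      have h := hw (Fin.natAdd n i)
      rw [Fin.append_right] at h
      have hv : (Fin.natAdd n i).val = i.val + n := by simp [Fin.natAdd, Nat.add_comm]
      rw [hv] at h
      exact h
    · intro h
      refine ⟨fun j => ω j.val, fun i => ?_⟩
      refine Fin.addCases (fun j => ?_) (fun j => ?_) i
      · rw [Fin.append_left]; rfl
      · rw [Fin.append_right]
        have h2 := h j
        have hv : (Fin.natAdd n j).val = j.val + n := by simp [Fin.natAdd, Nat.add_comm]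
        rw [hv]
        exact h2
  have hdisj : Pairwise (Function.onFun Disjoint
      fun w : Fin n → Bool => cyl (Fin.append w x)) := by
    intro w w' hne
    refine Set.disjoint_left.mpr fun ω hω hω' => hne ?_
    funext j
    have h1 := hω (Fin.castAdd m j)
    have h2 := hω' (Fin.castAdd m j)
    rw [Fin.append_left] at h1 h2
    rw [← h1, ← h2]
  calc ∑ w : Fin n → Bool, P (cyl (Fin.append w x))
      = P (⋃ w : Fin n → Bool, cyl (Fin.append w x)) := by
        rw [measure_iUnion hdisj fun w => measurableSet_cyl _, tsum_fintype]
    _ = P (cyl x) := by rw [hU, shift_iter_measure P hstat n (measurableSet_cyl x)]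

lemma append_right' {n k : ℕ} (w : Fin n → Bool) (v : Fin k → Bool) (j : ℕ)
    (h1 : j < k) (h2 : n + j < n + k) :
    Fin.append w v ⟨n + j, h2⟩ = v ⟨j, h1⟩ := by
  have h : (⟨n + j, h2⟩ : Fin (n + k)) = Fin.natAdd n ⟨j, h1⟩ := rfl
  rw [h, Fin.append_right]

lemma strategy_eval_eq (S : Strategy) {k : ℕ} (pref : Fin k → Bool)
    (k' : ℕ) (e : k' = k) (f : Fin k' → Bool)
    (hf : ∀ j : Fin k', f j = pref ⟨j.val, e ▸ j.isLt⟩) :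
    S k' f = S k pref := by
  subst e
  congr 1
  funext j
  rw [hf j]

/-- **Generalized Shannon inequality.** For any regular binary game, any stationary
probability measure `P` on `Σ^∞`, and all `m ≥ 1`, `n ≥ 0`, we have `H_{m|n} ≤ H_m`. -/
theorem generalized_shannon_inequality
    (G : RegularGame) (P : Measure (ℕ → Bool)) [IsProbabilityMeasure P]
    (hstat : P.map shiftN = P)
    (m n : ℕ) (hm : 1 ≤ m) :
    Hcond G P m n ≤ Hn G P m := by
  rw [Hn, Hcond]
  refine le_iInf fun S => ?_
  refine iInf_le_of_le
    (fun i h => S (i - n) (fun j : Fin (i - n) => h ⟨n + j.val, by omega⟩)) ?_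
  have key : ∀ (w : Fin n → Bool) (x : Fin m → Bool),
      (∑ i : Fin m, G.loss (x i)
        ((S ((n + i.val) - n)
          (fun j : Fin ((n + i.val) - n) =>
            Fin.append w (fun j' : Fin i.val => x ⟨j'.val, j'.isLt.trans i.isLt⟩)
              ⟨n + j.val, by omega⟩) : Set.Icc (0:ℝ) 1) : ℝ))
      = strategyLoss G x S := by
    intro w x
    rw [strategyLoss]
    refine Finset.sum_congr rfl fun i _ => ?_
    congr 1
    have e : (n + i.val) - n = i.val := by omega
    rw [strategy_eval_eq S (fun j : Fin i.val => x ⟨j.val, j.isLt.trans i.isLt⟩)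
      ((n + i.val) - n) e _ ?_]
    intro j
    exact append_right' w _ j.val _ _
  calc ∑ w : Fin n → Bool, ∑ x : Fin m → Bool,
        P (cyl (Fin.append w x)) *
          ∑ i : Fin m, G.loss (x i)
            ((S ((n + i.val) - n)
              (fun j : Fin ((n + i.val) - n) =>
                Fin.append w (fun j' : Fin i.val => x ⟨j'.val, j'.isLt.trans i.isLt⟩)
                  ⟨n + j.val, by omega⟩) : Set.Icc (0:ℝ) 1) : ℝ)
      = ∑ w : Fin n → Bool, ∑ x : Fin m → Bool,
          P (cyl (Fin.append w x)) * strategyLoss G x S := by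
        refine Finset.sum_congr rfl fun w _ => Finset.sum_congr rfl fun x _ => ?_
        rw [key w x]
    _ = ∑ x : Fin m → Bool,
          (∑ w : Fin n → Bool, P (cyl (Fin.append w x))) * strategyLoss G x S := by
        rw [Finset.sum_comm]
        exact Finset.sum_congr rfl fun x _ => (Finset.sum_mul _ _ _).symm
    _ = ∑ x : Fin m → Bool, P (cyl x) * strategyLoss G x S := by
        refine Finset.sum_congr rfl fun x _ => ?_
        rw [sum_cyl_append P hstat x]
    _ ≤ ∑ w : Fin m → Bool, P (cyl w) * strategyLoss G w S := le_rfl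
end
end

section
/- For any regular binary game and any stationary probability measure P on Σ^∞, and all natural numbers m ≥ 1 and n ≥ 0, the conditional generalized entropy is monotone in the length of the conditioning history: H_{m|n} ≥ H_{m|n+1}. -/
open MeasureTheory ENNReal Filter Topology

noncomputable section

lemma append_val {n m : ℕ} (u : Fin n → Bool) (v : Fin m → Bool) (j : ℕ) (h : j < n + m) :
    Fin.append u v ⟨j, h⟩ = if hj : j < n then u ⟨j, hj⟩ else v ⟨j - n, by omega⟩ := by
  by_cases hj : j < n
  · rw [dif_pos hj]
    have : (⟨j, h⟩ : Fin (n + m)) = Fin.castAdd m ⟨j, hj⟩ := rfl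
    rw [this, Fin.append_left]
  · rw [dif_neg hj]
    have : (⟨j, h⟩ : Fin (n + m)) = Fin.natAdd n ⟨j - n, by omega⟩ := by
      apply Fin.ext; simp; omega
    rw [this, Fin.append_right]

lemma cons_val {k : ℕ} (b : Bool) (w : Fin k → Bool) (j : ℕ) (h : j < k + 1) :
    (Fin.cons b w : Fin (k + 1) → Bool) ⟨j, h⟩ = if hj : j = 0 then b else w ⟨j - 1, by omega⟩ := by
  cases j with
  | zero => simp
  | succ j =>
      rw [dif_neg (Nat.succ_ne_zero j)]
      have : (⟨j + 1, h⟩ : Fin (k + 1)) = Fin.succ ⟨j, by omega⟩ := rfl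
      rw [this, Fin.cons_succ]
      congr 1

lemma strat_cast (S : Strategy) {a b : ℕ} (h : a = b) (f : Fin a → Bool) (g : Fin b → Bool)
    (hfg : ∀ j (h1 : j < a) (h2 : j < b), f ⟨j, h1⟩ = g ⟨j, h2⟩) : S a f = S b g := by
  subst h
  have : f = g := funext fun k => by simpa using hfg k.val k.isLt k.isLt
  rw [this]

lemma measurable_cyl {k : ℕ} (w : Fin k → Bool) : MeasurableSet (cyl w) := by
  have : cyl w = ⋂ i : Fin k, (fun ω : ℕ → Bool => ω i.val) ⁻¹' {w i} := by
    ext ω; simp [cyl]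
  rw [this]
  exact MeasurableSet.iInter fun i => (measurable_pi_apply i.val) (measurableSet_singleton _)

/-- A strategy that ignores the first bit of history. -/
def shiftStrategy (S : Strategy) : Strategy := fun i h =>
  if hi : 1 ≤ i then
    S (i - 1) (fun k : Fin (i - 1) => h ⟨k.val + 1, by have := k.isLt; omega⟩)
  else ⟨0, by norm_num⟩

lemma cyl_split (P : Measure (ℕ → Bool)) (hstat : P.map shiftN = P)
    {k : ℕ} (v : Fin k → Bool) :
    P (cyl (Fin.cons false v)) + P (cyl (Fin.cons true v)) = P (cyl v) := by
  have hpre : shiftN ⁻¹' cyl v = cyl (Fin.cons false v) ∪ cyl (Fin.cons true v) := by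
    ext ω
    constructor
    · intro hω
      have key : ∀ b : Bool, ω 0 = b → ω ∈ cyl (Fin.cons b v) := by
        intro b hb i
        refine Fin.cases ?_ ?_ i
        · simpa using hb
        · intro j; simpa [Fin.cons_succ, shiftN] using hω j
      cases hb : ω 0
      · exact Or.inl (key false hb)
      · exact Or.inr (key true hb)
    · rintro (hω | hω) i
      · simpa [Fin.cons_succ, shiftN] using hω (Fin.succ i)
      · simpa [Fin.cons_succ, shiftN] using hω (Fin.succ i)
  have hdisj : Disjoint (cyl (Fin.cons false v)) (cyl (Fin.cons true v)) := by
    rw [Set.disjoint_left]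
    intro ω h1 h2
    have e1 := h1 0
    have e2 := h2 0
    simp [Fin.cons_zero] at e1 e2
    rw [e1] at e2; exact Bool.false_ne_true e2
  calc P (cyl (Fin.cons false v)) + P (cyl (Fin.cons true v))
      = P (cyl (Fin.cons false v) ∪ cyl (Fin.cons true v)) :=
        (measure_union hdisj (measurable_cyl _)).symm
    _ = P (shiftN ⁻¹' cyl v) := by rw [hpre]
    _ = (P.map shiftN) (cyl v) := (Measure.map_apply measurable_shiftN (measurable_cyl v)).symm
    _ = P (cyl v) := by rw [hstat]

lemma cyl_cons_append {n m : ℕ} (b : Bool) (w : Fin n → Bool) (x : Fin m → Bool) :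
    cyl (Fin.append (Fin.cons b w) x) = cyl (Fin.cons b (Fin.append w x)) := by
  have key : ∀ j (h1 : j < n + 1 + m) (h2 : j < n + m + 1),
      Fin.append (Fin.cons b w) x ⟨j, h1⟩ = (Fin.cons b (Fin.append w x) : Fin (n + m + 1) → Bool) ⟨j, h2⟩ := by
    intro j h1 h2
    rw [append_val, cons_val]
    by_cases hj0 : j = 0
    · subst hj0
      rw [dif_pos (by omega), cons_val, dif_pos rfl, dif_pos rfl]
    · rw [dif_neg hj0, append_val]
      by_cases hjn : j < n + 1
      · rw [dif_pos hjn, cons_val, dif_neg hj0, dif_pos (by omega)]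
      · rw [dif_neg hjn, dif_neg (by omega)]
        congr 1
        apply Fin.ext
        simp; omega
  ext ω
  constructor <;> intro hω i
  · rw [show i = (⟨i.val, i.isLt⟩ : Fin (n + m + 1)) from rfl, ← key i.val (by omega) i.isLt]
    exact hω ⟨i.val, by omega⟩
  · rw [show i = (⟨i.val, i.isLt⟩ : Fin (n + 1 + m)) from rfl, key i.val i.isLt (by omega)]
    exact hω ⟨i.val, by omega⟩

/-- **Monotonicity of conditional generalized entropy in the conditioning history.**
For any regular binary game, any stationary probability measure `P` on `Σ^∞`, and all
`m ≥ 1`, `n ≥ 0`, we have `H_{m|n} ≥ H_{m|n+1}`. -/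
theorem conditional_entropy_antitone
    (G : RegularGame) (P : Measure (ℕ → Bool)) [IsProbabilityMeasure P]
    (hstat : P.map shiftN = P)
    (m n : ℕ) (hm : 1 ≤ m) :
    Hcond G P m (n + 1) ≤ Hcond G P m n := by
  simp only [Hcond]
  refine le_iInf fun S => ?_
  refine le_trans (iInf_le _ (shiftStrategy S)) (le_of_eq ?_)
  -- Step 1: rewrite the inner loss sums
  have hL : ∀ (w : Fin (n + 1) → Bool) (x : Fin m → Bool),
      (∑ i : Fin m, G.loss (x i)
        ((shiftStrategy S (n + 1 + i.val)
          (Fin.append w (fun j : Fin i.val => x ⟨j.val, j.isLt.trans i.isLt⟩)) : Set.Icc (0:ℝ) 1) : ℝ))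
      = ∑ i : Fin m, G.loss (x i)
        ((S (n + i.val)
          (Fin.append (Fin.tail w) (fun j : Fin i.val => x ⟨j.val, j.isLt.trans i.isLt⟩)) : Set.Icc (0:ℝ) 1) : ℝ) := by
    intro w x
    refine Finset.sum_congr rfl fun i _ => ?_
    have hS : shiftStrategy S (n + 1 + i.val)
        (Fin.append w (fun j : Fin i.val => x ⟨j.val, j.isLt.trans i.isLt⟩))
        = S (n + i.val)
          (Fin.append (Fin.tail w) (fun j : Fin i.val => x ⟨j.val, j.isLt.trans i.isLt⟩)) := by
      rw [shiftStrategy, dif_pos (by omega)]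
      refine strat_cast S (by omega) _ _ ?_
      intro j h1 h2
      rw [append_val, append_val]
      by_cases hj : j < n
      · rw [dif_pos (show j + 1 < n + 1 by omega), dif_pos hj]
        rfl
      · rw [dif_neg (show ¬ j + 1 < n + 1 by omega), dif_neg hj]
        congr 1
        apply Fin.ext
        simp only []
        omega
    rw [hS]
  simp only [hL]
  -- Step 2: reindex over the first bit
  rw [← Equiv.sum_comp (Fin.consEquiv fun _ : Fin (n + 1) => Bool)]
  rw [Fintype.sum_prod_type]
  rw [Finset.sum_comm]
  refine Finset.sum_congr rfl fun w' _ => ?_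
  rw [Finset.sum_comm]
  refine Finset.sum_congr rfl fun x _ => ?_
  have hc : ∀ b : Bool, (Fin.consEquiv fun _ : Fin (n + 1) => Bool) (b, w') = Fin.cons b w' :=
    fun b => rfl
  simp only [hc, Fin.tail_cons]
  rw [Fintype.sum_bool, ← add_mul]
  congr 1
  rw [cyl_cons_append, cyl_cons_append, add_comm]
  exact cyl_split P hstat (Fin.append w' x)
end
end

section
/- Let (Ω, F, P) be a probability space, T : Ω → Ω a measure-preserving ergodic transformation, and let g_k, g : Ω → [0,∞) (k ∈ ℕ) be integrable functions such that g_k → g P-almost everywhere and the sequence of functions G_N(ω) := sup_{k ≥ N} |g_k(ω) − g(ω)| (N = 1, 2, …) is uniformly integrable. Then for P-almost every ω, (1/n) Σ_{k=0}^{n−1} g_k(T^k ω) → ∫ g dP as n → ∞. -/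
open MeasureTheory ENNReal Filter Topology

noncomputable section

/-- A sequence of `[0,∞]`-valued functions `F_N` is uniformly integrable if
`lim_{α→∞} sup_N ∫ F_N · 1_{[F_N > α]} dP = 0`. -/
def UnifIntENN {Ω : Type*} [MeasurableSpace Ω] (P : Measure Ω) (F : ℕ → Ω → ℝ≥0∞) : Prop :=
  Tendsto (fun α : ℝ => ⨆ N : ℕ, ∫⁻ ω in {ω | ENNReal.ofReal α < F N ω}, F N ω ∂P)
    atTop (𝓝 0)

/-- The tail supremum `G_N(ω) = sup_{k ≥ N} |g_k(ω) − g(ω)|` (valued in `[0,∞]`). -/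
def tailSup {Ω : Type*} (g : ℕ → Ω → ℝ) (g0 : Ω → ℝ) (N : ℕ) (ω : Ω) : ℝ≥0∞ :=
  ⨆ k : ℕ, ⨆ _ : N ≤ k, ENNReal.ofReal |g k ω - g0 ω|


open MeasureTheory ENNReal Filter Topology

noncomputable section

namespace BirkhoffAux

set_option linter.unusedSectionVars false
set_option linter.unusedVariables false
variable {Ω : Type*} [MeasurableSpace Ω] {P : Measure Ω} [IsProbabilityMeasure P] {T : Ω → Ω} {f : Ω → ℝ}

lemma integrable_comp_mp (h : MeasurePreserving T P P) (hfm : AEStronglyMeasurable f P)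
    (hfi : Integrable f P) : Integrable (fun x => f (T x)) P := by
  have : Integrable f (Measure.map T P) := by rwa [h.map_eq]
  exact (integrable_map_measure (by rwa [h.map_eq]) h.measurable.aemeasurable).mp this

lemma integral_comp_eq (h : MeasurePreserving T P P) (hfm : AEStronglyMeasurable f P) :
    ∫ x, f (T x) ∂P = ∫ x, f x ∂P := by
  rw [← integral_map h.measurable.aemeasurable (by rwa [h.map_eq]), h.map_eq]

/-- Running maximum of Birkhoff sums (including the empty sum `0`). -/
def birkMax (T : Ω → Ω) (f : Ω → ℝ) : ℕ → Ω → ℝ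
  | 0 => fun _ => 0
  | n + 1 => fun x => birkMax T f n x ⊔ birkhoffSum T f (n + 1) x

lemma birkMax_nonneg (n : ℕ) (x : Ω) : 0 ≤ birkMax T f n x := by
  induction n with
  | zero => exact le_refl 0
  | succ n ih => exact le_sup_of_le_left ih

lemma birkMax_succ_le (n : ℕ) (x : Ω) : birkMax T f n x ≤ birkMax T f (n + 1) x := le_sup_left

lemma birkMax_mono {m n : ℕ} (h : m ≤ n) (x : Ω) : birkMax T f m x ≤ birkMax T f n x := by
  induction h with
  | refl => exact le_refl _
  | step _ ih => exact le_trans ih (birkMax_succ_le _ _)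

lemma birkhoffSum_le_birkMax {k n : ℕ} (h : k ≤ n) (x : Ω) :
    birkhoffSum T f k x ≤ birkMax T f n x := by
  induction n with
  | zero => interval_cases k; simp [birkMax, birkhoffSum_zero]
  | succ n ih =>
    rcases Nat.lt_or_ge k (n + 1) with hk | hk
    · exact le_trans (ih (Nat.lt_succ_iff.mp hk)) (birkMax_succ_le n x)
    · have : k = n + 1 := le_antisymm h hk
      subst this
      exact le_sup_right

lemma exists_of_birkMax_pos {n : ℕ} {x : Ω} (h : 0 < birkMax T f n x) :
    ∃ k < n, birkMax T f n x = birkhoffSum T f (k + 1) x := by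
  induction n with
  | zero => simp [birkMax] at h
  | succ n ih =>
    rcases le_total (birkhoffSum T f (n + 1) x) (birkMax T f n x) with h0 | h0
    · have he : birkMax T f (n + 1) x = birkMax T f n x := sup_eq_left.mpr h0
      rw [he] at h ⊢
      obtain ⟨k, hk, hv⟩ := ih h
      exact ⟨k, Nat.lt_succ_of_lt hk, hv⟩
    · have he : birkMax T f (n + 1) x = birkhoffSum T f (n + 1) x := sup_eq_right.mpr h0
      exact ⟨n, Nat.lt_succ_self n, he⟩

lemma key_ineq {n : ℕ} {x : Ω} (h : 0 < birkMax T f (n + 1) x) :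
    birkMax T f (n + 1) x ≤ f x + birkMax T f n (T x) := by
  obtain ⟨k, hk, hval⟩ := exists_of_birkMax_pos h
  rw [hval, birkhoffSum_succ']
  exact add_le_add_right (birkhoffSum_le_birkMax (Nat.lt_succ_iff.mp hk) (T x)) _

lemma measurable_birkhoffSum (hT : Measurable T) (hm : Measurable f) (n : ℕ) :
    Measurable (birkhoffSum T f n) :=
  Finset.measurable_sum _ fun k _ => hm.comp (hT.iterate k)

lemma measurable_birkMax (hT : Measurable T) (hm : Measurable f) (n : ℕ) :
    Measurable (birkMax T f n) := by
  induction n with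
  | zero => exact measurable_const
  | succ n ih => exact ih.sup (measurable_birkhoffSum hT hm (n + 1))

lemma integrable_birkhoffSum (hT : MeasurePreserving T P P) (hm : Measurable f)
    (hi : Integrable f P) (n : ℕ) : Integrable (birkhoffSum T f n) P := by
  refine integrable_finset_sum _ fun k _ => ?_
  have : Integrable (fun x => f (T^[k] x)) P :=
    integrable_comp_mp (hT.iterate k) hi.1 hi
  exact this

lemma integrable_birkMax (hT : MeasurePreserving T P P) (hm : Measurable f)
    (hi : Integrable f P) (n : ℕ) : Integrable (birkMax T f n) P := by
  induction n with
  | zero => exact integrable_const 0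
  | succ n ih => exact ih.sup (integrable_birkhoffSum hT hm hi (n + 1))


theorem maximal_ergodic (hT : MeasurePreserving T P P) (hm : Measurable f)
    (hi : Integrable f P) :
    0 ≤ ∫ x in {x | ∃ n : ℕ, 0 < birkhoffSum T f (n + 1) x}, f x ∂P := by
  set A : ℕ → Set Ω := fun n => {x | 0 < birkMax T f n x} with hA
  have hAmeas : ∀ n, MeasurableSet (A n) :=
    fun n => measurableSet_lt measurable_const (measurable_birkMax hT.measurable hm n)
  have hmono : Monotone A := fun m n hmn x hx => lt_of_lt_of_le hx (birkMax_mono hmn x)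
  have hMT : ∀ n : ℕ, Integrable (fun x => birkMax T f n (T x)) P := fun n =>
    integrable_comp_mp hT (integrable_birkMax hT hm hi n).1 (integrable_birkMax hT hm hi n)
  have hstep : ∀ n, 0 ≤ ∫ x in A n, f x ∂P := by
    intro n
    cases n with
    | zero =>
      have : A 0 = ∅ := by ext x; simp [hA, birkMax]
      simp [this]
    | succ n =>
      have h1 : ∫ x in A (n+1), (birkMax T f (n+1) x - birkMax T f n (T x)) ∂P
          ≤ ∫ x in A (n+1), f x ∂P := by
        refine setIntegral_mono_on
          (((integrable_birkMax hT hm hi (n+1)).sub (hMT n)).integrableOn)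
          hi.integrableOn (hAmeas (n+1)) ?_
        intro x hx
        have := key_ineq (T := T) (f := f) hx
        linarith
      have h2 : ∫ x in A (n+1), (birkMax T f (n+1) x - birkMax T f n (T x)) ∂P
          = ∫ x in A (n+1), birkMax T f (n+1) x ∂P
            - ∫ x in A (n+1), birkMax T f n (T x) ∂P :=
        integral_sub ((integrable_birkMax hT hm hi (n+1)).integrableOn) ((hMT n).integrableOn)
      have h3 : ∫ x in A (n+1), birkMax T f (n+1) x ∂P = ∫ x, birkMax T f (n+1) x ∂P := by
        refine setIntegral_eq_integral_of_forall_compl_eq_zero ?_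
        intro x hx
        have h0 : ¬ 0 < birkMax T f (n+1) x := hx
        exact le_antisymm (not_lt.mp h0) (birkMax_nonneg _ _)
      have h4 : ∫ x in A (n+1), birkMax T f n (T x) ∂P ≤ ∫ x, birkMax T f n (T x) ∂P :=
        setIntegral_le_integral (hMT n) (Eventually.of_forall fun x => birkMax_nonneg _ _)
      have h5 : ∫ x, birkMax T f n (T x) ∂P = ∫ x, birkMax T f n x ∂P :=
        integral_comp_eq hT (integrable_birkMax hT hm hi n).1
      have h6 : ∫ x, birkMax T f n x ∂P ≤ ∫ x, birkMax T f (n+1) x ∂P :=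
        integral_mono (integrable_birkMax hT hm hi n) (integrable_birkMax hT hm hi (n+1))
          (fun x => birkMax_succ_le n x)
      linarith
  have hunion : (⋃ n, A n) = {x | ∃ n : ℕ, 0 < birkhoffSum T f (n + 1) x} := by
    ext x
    simp only [Set.mem_iUnion, Set.mem_setOf_eq, hA]
    constructor
    · rintro ⟨n, hn⟩
      obtain ⟨k, _, hv⟩ := exists_of_birkMax_pos hn
      exact ⟨k, hv ▸ hn⟩
    · rintro ⟨n, hn⟩
      exact ⟨n + 1, lt_of_lt_of_le hn (birkhoffSum_le_birkMax (le_refl _) x)⟩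
  have htend := tendsto_setIntegral_of_monotone hAmeas hmono
    (hi.integrableOn : IntegrableOn f (⋃ n, A n) P)
  rw [hunion] at htend
  exact ge_of_tendsto htend (Eventually.of_forall hstep)


/-- The (EReal-valued) limsup of Birkhoff averages. -/
def birkLimsup (T : Ω → Ω) (f : Ω → ℝ) (x : Ω) : EReal :=
  limsup (fun n : ℕ => ((birkhoffSum T f n x / n : ℝ) : EReal)) atTop

lemma claim1 (x : Ω) (y : ℝ) (h : birkLimsup T f x < (y : EReal)) :
    birkLimsup T f (T x) ≤ (y : EReal) := by
  have hev : ∀ᶠ n : ℕ in atTop, ((birkhoffSum T f n x / n : ℝ) : EReal) < (y : EReal) :=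
    eventually_lt_of_limsup_lt h
  have hev2 : ∀ᶠ n : ℕ in atTop, birkhoffSum T f (n + 1) x / ((n : ℝ) + 1) < y := by
    have := (tendsto_add_atTop_nat 1).eventually (hev.mono fun n hn => EReal.coe_lt_coe_iff.mp hn)
    exact this.mono fun n hn => by exact_mod_cast hn
  set c : ℕ → ℝ := fun n => y + (y - f x) / n with hc_def
  have hc : Tendsto c atTop (𝓝 y) := by
    have := tendsto_const_div_atTop_nhds_zero_nat (y - f x)
    simpa using tendsto_const_nhds.add this
  have hle : ∀ᶠ n : ℕ in atTop,
      ((birkhoffSum T f n (T x) / n : ℝ) : EReal) ≤ ((c n : ℝ) : EReal) := by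
    filter_upwards [hev2, eventually_ge_atTop 1] with n h1 h2
    rw [EReal.coe_le_coe_iff]
    have hn : (0 : ℝ) < n := by exact_mod_cast h2
    have hn1 : (0 : ℝ) < (n : ℝ) + 1 := by positivity
    have hS : birkhoffSum T f (n + 1) x = f x + birkhoffSum T f n (T x) :=
      birkhoffSum_succ' T f n x
    have h1' : birkhoffSum T f (n + 1) x < y * ((n : ℝ) + 1) := (div_lt_iff₀ hn1).mp h1
    have hnum : birkhoffSum T f n (T x) ≤ y * ((n : ℝ) + 1) - f x := by linarith
    calc birkhoffSum T f n (T x) / n ≤ (y * ((n : ℝ) + 1) - f x) / n :=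
          (div_le_div_iff_of_pos_right hn).mpr hnum
      _ = c n := by simp only [hc_def]; field_simp; ring
  calc birkLimsup T f (T x)
      ≤ limsup (fun n : ℕ => ((c n : ℝ) : EReal)) atTop := limsup_le_limsup hle
    _ = (y : EReal) := (EReal.tendsto_coe.mpr hc).limsup_eq

lemma claim2 (x : Ω) (y : ℝ) (h : birkLimsup T f (T x) < (y : EReal)) :
    birkLimsup T f x ≤ (y : EReal) := by
  have hev : ∀ᶠ n : ℕ in atTop, birkhoffSum T f n (T x) / (n : ℝ) < y :=
    (eventually_lt_of_limsup_lt h).mono fun n hn => EReal.coe_lt_coe_iff.mp hn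
  set d : ℕ → ℝ := fun n => y + (f x - y) / ((n : ℝ) + 1) with hd_def
  have hd : Tendsto d atTop (𝓝 y) := by
    have h0 : Tendsto (fun n : ℕ => (f x - y) / ((n : ℝ) + 1)) atTop (𝓝 0) := by
      have h1 := (tendsto_const_div_atTop_nhds_zero_nat (f x - y)).comp (tendsto_add_atTop_nat 1)
      refine h1.congr fun n => ?_
      simp only [Function.comp_apply]
      push_cast
      ring_nf
    simpa using tendsto_const_nhds.add h0
  have hle : ∀ᶠ n : ℕ in atTop,
      ((birkhoffSum T f (n + 1) x / ((n : ℝ) + 1) : ℝ) : EReal) ≤ ((d n : ℝ) : EReal) := by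
    filter_upwards [hev, eventually_ge_atTop 1] with n h1 h2
    rw [EReal.coe_le_coe_iff]
    have hn : (0 : ℝ) < n := by exact_mod_cast h2
    have hn1 : (0 : ℝ) < (n : ℝ) + 1 := by positivity
    have hS : birkhoffSum T f (n + 1) x = f x + birkhoffSum T f n (T x) :=
      birkhoffSum_succ' T f n x
    have h1' : birkhoffSum T f n (T x) < y * n := (div_lt_iff₀ hn).mp h1
    have hnum : birkhoffSum T f (n + 1) x ≤ y * n + f x := by linarith
    calc birkhoffSum T f (n + 1) x / ((n : ℝ) + 1) ≤ (y * n + f x) / ((n : ℝ) + 1) :=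
          (div_le_div_iff_of_pos_right hn1).mpr hnum
      _ = d n := by simp only [hd_def]; field_simp; ring
  have hshift : birkLimsup T f x
      = limsup (fun n : ℕ => ((birkhoffSum T f (n + 1) x / ((n : ℝ) + 1) : ℝ) : EReal)) atTop := by
    rw [birkLimsup]
    rw [← limsup_nat_add (fun n : ℕ => ((birkhoffSum T f n x / n : ℝ) : EReal)) 1]
    congr 1 with n
    push_cast
    rfl
  calc birkLimsup T f x
      ≤ limsup (fun n : ℕ => ((d n : ℝ) : EReal)) atTop := hshift ▸ limsup_le_limsup hle
    _ = (y : EReal) := (EReal.tendsto_coe.mpr hd).limsup_eq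

lemma birkLimsup_comp (x : Ω) : birkLimsup T f (T x) = birkLimsup T f x := by
  refine le_antisymm ?_ ?_
  · by_contra hcon
    push_neg at hcon
    obtain ⟨y, hy1, hy2⟩ := EReal.exists_between_coe_real hcon
    exact absurd (claim1 x y hy1) (not_le.mpr hy2)
  · by_contra hcon
    push_neg at hcon
    obtain ⟨y, hy1, hy2⟩ := EReal.exists_between_coe_real hcon
    exact absurd (claim2 x y hy1) (not_le.mpr hy2)


lemma measurable_birkLimsup (hT : Measurable T) (hm : Measurable f) :
    Measurable (birkLimsup T f) :=
  Measurable.limsup fun n => ((measurable_birkhoffSum hT hm n).div_const _).coe_real_ereal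

lemma birkLimsup_ae_le (hT : Ergodic T P) (hm : Measurable f) (hi : Integrable f P) :
    ∀ᵐ x ∂P, birkLimsup T f x ≤ ((∫ x, f x ∂P : ℝ) : EReal) := by
  have key : ∀ q : ℚ, (∫ x, f x ∂P) < (q : ℝ) →
      ∀ᵐ x ∂P, ¬ (((q : ℝ) : EReal) < birkLimsup T f x) := by
    intro q hq
    set E := {x | ((q : ℝ) : EReal) < birkLimsup T f x} with hE
    have hEmeas : MeasurableSet E :=
      measurableSet_lt measurable_const
        (measurable_birkLimsup hT.toMeasurePreserving.measurable hm)
    have hEinv : T ⁻¹' E = E := by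
      ext x
      simp only [hE, Set.mem_preimage, Set.mem_setOf_eq, birkLimsup_comp]
    rcases hT.toPreErgodic.ae_empty_or_univ hEmeas hEinv with h | h
    · have : P E = 0 := ae_eq_empty.mp h
      exact (measure_eq_zero_iff_ae_notMem.mp this)
    · exfalso
      set g : Ω → ℝ := fun x => f x - q with hg
      have hgm : Measurable g := hm.sub measurable_const
      have hgi : Integrable g P := hi.sub (integrable_const _)
      set A := {x | ∃ n : ℕ, 0 < birkhoffSum T g (n + 1) x} with hA
      have hsub : E ⊆ A := by
        intro x hx
        have hfreq : ∃ᶠ n in atTop,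
            (((q : ℝ) : EReal) < ((birkhoffSum T f n x / n : ℝ) : EReal)) :=
          frequently_lt_of_lt_limsup (by isBoundedDefault) hx
        obtain ⟨n, hn1, hn⟩ := (eventually_ge_atTop 1).and_frequently hfreq |>.exists
        obtain ⟨m, rfl⟩ : ∃ m, n = m + 1 := ⟨n - 1, (Nat.succ_pred_eq_of_pos hn1).symm⟩
        refine ⟨m, ?_⟩
        have hq' : (q : ℝ) < birkhoffSum T f (m + 1) x / ((m : ℝ) + 1) := by
          have := EReal.coe_lt_coe_iff.mp hn
          exact_mod_cast this
        have hpos : (0 : ℝ) < (m : ℝ) + 1 := by positivity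
        have hq'' : (q : ℝ) * ((m : ℝ) + 1) < birkhoffSum T f (m + 1) x :=
          (lt_div_iff₀ hpos).mp hq'
        have hsum : birkhoffSum T g (m + 1) x
            = birkhoffSum T f (m + 1) x - ((m : ℝ) + 1) * q := by
          simp only [hg, birkhoffSum, Finset.sum_sub_distrib, Finset.sum_const,
            Finset.card_range, nsmul_eq_mul]
          push_cast
          ring
        rw [hsum]
        linarith
      have hEuniv : ∀ᵐ x ∂P, x ∈ E := by
        have := ae_eq_univ.mp h
        exact (measure_eq_zero_iff_ae_notMem.mp this).mono fun x hx => not_not.mp hx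
      have hAae : ∀ᵐ x ∂P, x ∉ A → g x = 0 :=
        hEuniv.mono fun x hx hxA => absurd (hsub hx) hxA
      have hMET := maximal_ergodic hT.toMeasurePreserving hgm hgi
      rw [show {x | ∃ n : ℕ, 0 < birkhoffSum T g (n + 1) x} = A from rfl] at hMET
      rw [setIntegral_eq_integral_of_ae_compl_eq_zero hAae] at hMET
      have hint : ∫ x, g x ∂P = (∫ x, f x ∂P) - q := by
        rw [hg]
        rw [integral_sub hi (integrable_const _)]
        simp [measure_univ]
      rw [hint] at hMET
      linarith
  have hae : ∀ᵐ x ∂P, ∀ q : ℚ, (∫ x, f x ∂P) < (q : ℝ) →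
      ¬ (((q : ℝ) : EReal) < birkLimsup T f x) := by
    rw [ae_all_iff]
    intro q
    by_cases hq : (∫ x, f x ∂P) < (q : ℝ)
    · exact (key q hq).mono fun x hx _ => hx
    · exact Eventually.of_forall fun x hx => absurd hx hq
  refine hae.mono fun x hx => ?_
  by_contra hcon
  push_neg at hcon
  obtain ⟨q, hq1, hq2⟩ := EReal.lt_iff_exists_rat_btwn.mp hcon
  exact hx q (by exact_mod_cast EReal.coe_lt_coe_iff.mp hq1) hq2


theorem birkhoff_ae (hT : Ergodic T P) (hm : Measurable f) (hi : Integrable f P) :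
    ∀ᵐ x ∂P, Tendsto (fun n : ℕ => birkhoffSum T f n x / n) atTop (𝓝 (∫ x, f x ∂P)) := by
  have hpos := birkLimsup_ae_le hT hm hi
  have hneg := birkLimsup_ae_le hT hm.neg hi.neg
  filter_upwards [hpos, hneg] with x h1 h2
  set I : ℝ := ∫ x, f x ∂P with hI
  set b : ℕ → EReal := fun n => ((birkhoffSum T f n x / n : ℝ) : EReal) with hb
  have hsumneg : ∀ n, birkhoffSum T (-f) n x = -(birkhoffSum T f n x) := by
    intro n
    simp [birkhoffSum, Finset.sum_neg_distrib]
  have hIneg : ∫ x, (-f) x ∂P = -I := by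
    simp [hI, integral_neg]
  have h2' : limsup (-b) atTop ≤ ((-I : ℝ) : EReal) := by
    have heq : birkLimsup T (fun x => -f x) x = limsup (-b) atTop := by
      rw [birkLimsup]
      congr 1 with n
      have := hsumneg n
      simp only [Pi.neg_apply] at this ⊢
      rw [show birkhoffSum T (fun x => -f x) n x = -birkhoffSum T f n x from this]
      simp [hb, neg_div, EReal.coe_neg]
    have hIneg' : ∫ x, -f x ∂P = -I := by simp [hI, integral_neg]
    change birkLimsup T (fun x => -f x) x ≤ ((∫ x, -f x ∂P : ℝ) : EReal) at h2
    rw [heq, hIneg'] at h2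
    exact_mod_cast h2
  rw [EReal.limsup_neg] at h2'
  have hli : ((I : ℝ) : EReal) ≤ liminf b atTop := by
    rw [EReal.coe_neg] at h2'
    exact EReal.neg_le_neg_iff.mp h2'
  have hls : limsup b atTop ≤ ((I : ℝ) : EReal) := h1
  have hlimsup : limsup b atTop = ((I : ℝ) : EReal) :=
    le_antisymm hls (le_trans hli (liminf_le_limsup))
  have hliminf : liminf b atTop = ((I : ℝ) : EReal) :=
    le_antisymm (le_trans (liminf_le_limsup) hls) hli
  have ht : Tendsto b atTop (𝓝 ((I : ℝ) : EReal)) :=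
    tendsto_of_liminf_eq_limsup hliminf hlimsup
  exact EReal.tendsto_coe.mp ht


end BirkhoffAux

/-- **An ergodic theorem with varying integrands.** Let `T` be a measure-preserving
ergodic transformation of a probability space `(Ω, F, P)` and `g_k, g : Ω → [0,∞)`
integrable nonnegative functions with `g_k → g` `P`-a.e. If the tail suprema
`G_N(ω) = sup_{k ≥ N} |g_k(ω) − g(ω)|` form a uniformly integrable sequence, then for
`P`-a.e. `ω`, `(1/n) Σ_{k<n} g_k(T^k ω) → ∫ g dP`. -/
theorem birkhoff_varying_integrands
    {Ω : Type*} [MeasurableSpace Ω] (P : Measure Ω) [IsProbabilityMeasure P]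
    (T : Ω → Ω) (hT : Ergodic T P)
    (g : ℕ → Ω → ℝ) (g0 : Ω → ℝ)
    (hg_meas : ∀ n, Measurable (g n)) (hg0_meas : Measurable g0)
    (hg_nonneg : ∀ n ω, 0 ≤ g n ω) (hg0_nonneg : ∀ ω, 0 ≤ g0 ω)
    (hg_int : ∀ n, Integrable (g n) P) (hg0_int : Integrable g0 P)
    (hconv : ∀ᵐ ω ∂P, Tendsto (fun n => g n ω) atTop (𝓝 (g0 ω)))
    (hUI : UnifIntENN P (tailSup g g0)) :
    ∀ᵐ ω ∂P, Tendsto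
      (fun n : ℕ => (∑ k ∈ Finset.range n, g k (T^[k] ω)) / n)
      atTop (𝓝 (∫ ω, g0 ω ∂P)) := by
  classical
  set G : ℕ → Ω → ℝ≥0∞ := tailSup g g0 with hG
  have hGmeas : ∀ N, Measurable (G N) := by
    intro N
    refine Measurable.iSup fun k => Measurable.iSup fun _ => ?_
    exact ((hg_meas k).sub hg0_meas).abs.ennreal_ofReal
  -- finiteness of each ∫⁻ G N
  obtain ⟨α₀, hα₀⟩ : ∃ α₀ : ℝ,
      (⨆ N : ℕ, ∫⁻ ω in {ω | ENNReal.ofReal α₀ < G N ω}, G N ω ∂P) ≤ 1 :=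
    (hUI.eventually_le_const zero_lt_one).exists
  have hGfin : ∀ N, ∫⁻ ω, G N ω ∂P ≠ ⊤ := by
    intro N
    set s := {ω | ENNReal.ofReal α₀ < G N ω} with hs
    have hsm : MeasurableSet s := measurableSet_lt measurable_const (hGmeas N)
    have hsplit : ∫⁻ ω, G N ω ∂P = (∫⁻ ω in s, G N ω ∂P) + ∫⁻ ω in sᶜ, G N ω ∂P :=
      (lintegral_add_compl _ hsm).symm
    have h1 : ∫⁻ ω in s, G N ω ∂P ≤ 1 :=
      le_trans (le_iSup (fun M => ∫⁻ ω in {ω | ENNReal.ofReal α₀ < G M ω}, G M ω ∂P) N) hα₀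
    have h2 : ∫⁻ ω in sᶜ, G N ω ∂P ≤ ENNReal.ofReal α₀ := by
      calc ∫⁻ ω in sᶜ, G N ω ∂P ≤ ∫⁻ _ in sᶜ, ENNReal.ofReal α₀ ∂P :=
            setLIntegral_mono measurable_const fun x hx => not_lt.mp hx
        _ = ENNReal.ofReal α₀ * P sᶜ := setLIntegral_const _ _
        _ ≤ ENNReal.ofReal α₀ * 1 := by gcongr; exact prob_le_one
        _ = ENNReal.ofReal α₀ := mul_one _
    rw [hsplit]
    exact ne_top_of_le_ne_top (by simp) (add_le_add h1 h2)
  -- pointwise convergence of the tail sups to 0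
  have htail0 : ∀ ω, Tendsto (fun k => g k ω) atTop (𝓝 (g0 ω)) →
      Tendsto (fun N => G N ω) atTop (𝓝 0) := by
    intro ω hω
    rw [ENNReal.tendsto_atTop_zero]
    intro ε hε
    rcases eq_top_or_lt_top ε with rfl | hεtop
    · exact ⟨0, fun n _ => le_top⟩
    have hεr : 0 < ε.toReal := ENNReal.toReal_pos hε.ne' hεtop.ne
    rw [Metric.tendsto_atTop] at hω
    obtain ⟨K, hK⟩ := hω ε.toReal hεr
    refine ⟨K, fun N hN => ?_⟩
    refine iSup₂_le fun k hk => ?_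
    have : |g k ω - g0 ω| ≤ ε.toReal := by
      have := hK k (le_trans hN hk)
      rw [Real.dist_eq] at this
      exact this.le
    calc ENNReal.ofReal |g k ω - g0 ω| ≤ ENNReal.ofReal ε.toReal :=
          ENNReal.ofReal_le_ofReal this
      _ = ε := ENNReal.ofReal_toReal hεtop.ne
  -- ∫⁻ G N → 0
  have hGtend : Tendsto (fun N => ∫⁻ ω, G N ω ∂P) atTop (𝓝 0) := by
    rw [ENNReal.tendsto_atTop_zero]
    intro ε hε
    have hε2 : (0 : ℝ≥0∞) < ε / 2 := ENNReal.half_pos hε.ne'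
    obtain ⟨α, hα⟩ : ∃ α : ℝ,
        (⨆ N : ℕ, ∫⁻ ω in {ω | ENNReal.ofReal α < G N ω}, G N ω ∂P) ≤ ε / 2 :=
      (hUI.eventually_le_const hε2).exists
    have hmin : Tendsto (fun N => ∫⁻ ω, min (G N ω) (ENNReal.ofReal α) ∂P) atTop (𝓝 0) := by
      have h0 : (0 : ℝ≥0∞) = ∫⁻ _, (0 : ℝ≥0∞) ∂P := by simp
      rw [h0]
      refine tendsto_lintegral_of_dominated_convergence (fun _ => ENNReal.ofReal α)
        (fun N => (hGmeas N).min measurable_const)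
        (fun N => Eventually.of_forall fun ω => min_le_right _ _) (by simp) ?_
      filter_upwards [hconv] with ω hω
      have := htail0 ω hω
      have hsq : Tendsto (fun N => min (G N ω) (ENNReal.ofReal α)) atTop (𝓝 0) :=
        tendsto_of_tendsto_of_tendsto_of_le_of_le tendsto_const_nhds this
          (fun N => zero_le) (fun N => min_le_left _ _)
      exact hsq
    obtain ⟨N₀, hN₀⟩ := (ENNReal.tendsto_atTop_zero.mp hmin) (ε / 2) hε2
    refine ⟨N₀, fun N hN => ?_⟩
    set s := {ω | ENNReal.ofReal α < G N ω} with hs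
    have hsm : MeasurableSet s := measurableSet_lt measurable_const (hGmeas N)
    have hsplit : ∫⁻ ω, G N ω ∂P = (∫⁻ ω in s, G N ω ∂P) + ∫⁻ ω in sᶜ, G N ω ∂P :=
      (lintegral_add_compl _ hsm).symm
    have h1 : ∫⁻ ω in s, G N ω ∂P ≤ ε / 2 :=
      le_trans (le_iSup (fun M => ∫⁻ ω in {ω | ENNReal.ofReal α < G M ω}, G M ω ∂P) N) hα
    have h2 : ∫⁻ ω in sᶜ, G N ω ∂P ≤ ε / 2 := by
      calc ∫⁻ ω in sᶜ, G N ω ∂P = ∫⁻ ω in sᶜ, min (G N ω) (ENNReal.ofReal α) ∂P := by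
            refine setLIntegral_congr_fun hsm.compl (fun x hx => ?_)
            simp only [hs, Set.mem_compl_iff, Set.mem_setOf_eq, not_lt] at hx
            exact (min_eq_left hx).symm
        _ ≤ ∫⁻ ω, min (G N ω) (ENNReal.ofReal α) ∂P := setLIntegral_le_lintegral _ _
        _ ≤ ε / 2 := hN₀ N hN
    calc ∫⁻ ω, G N ω ∂P ≤ ε / 2 + ε / 2 := hsplit ▸ add_le_add h1 h2
      _ = ε := ENNReal.add_halves ε
  -- the real-valued tail sups
  set G' : ℕ → Ω → ℝ := fun N ω => (G N ω).toReal with hG'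
  have hG'meas : ∀ N, Measurable (G' N) := fun N => (hGmeas N).ennreal_toReal
  have hG'int : ∀ N, Integrable (G' N) P := fun N =>
    integrable_toReal_of_lintegral_ne_top (hGmeas N).aemeasurable (hGfin N)
  have hG'eq : ∀ N, ∫ ω, G' N ω ∂P = (∫⁻ ω, G N ω ∂P).toReal := fun N =>
    integral_toReal (hGmeas N).aemeasurable (ae_lt_top (hGmeas N) (hGfin N))
  have hG'tend : Tendsto (fun N => ∫ ω, G' N ω ∂P) atTop (𝓝 0) := by
    have := (ENNReal.tendsto_toReal (by simp : (0:ℝ≥0∞) ≠ ⊤)).comp hGtend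
    simpa [Function.comp_def, hG'eq] using this
  -- Birkhoff theorem applications
  have hB0 := BirkhoffAux.birkhoff_ae hT hg0_meas hg0_int
  have hBN : ∀ᵐ x ∂P, ∀ N, Tendsto (fun n : ℕ => birkhoffSum T (G' N) n x / n) atTop
      (𝓝 (∫ ω, G' N ω ∂P)) :=
    ae_all_iff.mpr fun N => BirkhoffAux.birkhoff_ae hT (hG'meas N) (hG'int N)
  -- a.e. finiteness along orbits
  have hfin : ∀ᵐ x ∂P, ∀ N k : ℕ, G N (T^[k] x) ≠ ⊤ := by
    rw [ae_all_iff]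
    intro N
    rw [ae_all_iff]
    intro k
    have base : ∀ᵐ y ∂P, G N y ≠ ⊤ :=
      (ae_lt_top (hGmeas N) (hGfin N)).mono fun y hy => hy.ne
    have hTk := hT.toMeasurePreserving.iterate k
    have hms : MeasurableSet {y | G N y ≠ ⊤} := by
      have : {y | G N y ≠ ⊤} = (G N ⁻¹' {⊤})ᶜ := rfl
      rw [this]
      exact (hGmeas N (measurableSet_singleton ⊤)).compl
    rw [← hTk.map_eq] at base
    exact (ae_map_iff hTk.measurable.aemeasurable hms).mp base
  -- the main pointwise argument
  filter_upwards [hB0, hBN, hfin] with ω h0 hN hfinω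
  set D : ℕ → ℝ := fun n => (∑ k ∈ Finset.range n, (g k (T^[k] ω) - g0 (T^[k] ω))) / n with hD
  have hdecomp : ∀ n : ℕ, (∑ k ∈ Finset.range n, g k (T^[k] ω)) / n
      = birkhoffSum T g0 n ω / n + D n := by
    intro n
    rw [hD, birkhoffSum, ← add_div, ← Finset.sum_add_distrib]
    congr 1
    refine Finset.sum_congr rfl fun k _ => by ring
  have hDtend : Tendsto D atTop (𝓝 0) := by
    rw [Metric.tendsto_atTop]
    intro ε hε
    have hε3 : (0:ℝ) < ε / 3 := by linarith
    obtain ⟨N, hN3⟩ := (hG'tend.eventually_lt_const hε3).exists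
    have h2 : ∀ᶠ n : ℕ in atTop, birkhoffSum T (G' N) n ω / n < 2 * ε / 3 :=
      (hN N).eventually_lt_const (by linarith)
    set C : ℝ := ∑ k ∈ Finset.range N, |g k (T^[k] ω) - g0 (T^[k] ω)| with hC
    have h3 : ∀ᶠ n : ℕ in atTop, C / n < ε / 3 :=
      (tendsto_const_div_atTop_nhds_zero_nat C).eventually_lt_const hε3
    rw [Metric.tendsto_atTop] at *
    obtain ⟨n2, hn2⟩ := eventually_atTop.mp h2
    obtain ⟨n3, hn3⟩ := eventually_atTop.mp h3
    refine ⟨max 1 (max n2 n3), fun n hn => ?_⟩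
    have hn1 : 1 ≤ n := le_trans (le_max_left _ _) hn
    have hnpos : (0:ℝ) < n := by exact_mod_cast hn1
    have key : ∀ k, |g k (T^[k] ω) - g0 (T^[k] ω)|
        ≤ (if k < N then |g k (T^[k] ω) - g0 (T^[k] ω)| else 0) + G' N (T^[k] ω) := by
      intro k
      by_cases hk : k < N
      · simp only [hk, if_true]
        have : (0:ℝ) ≤ G' N (T^[k] ω) := ENNReal.toReal_nonneg
        linarith
      · simp only [hk, if_false, zero_add]
        have hle : ENNReal.ofReal |g k (T^[k] ω) - g0 (T^[k] ω)| ≤ G N (T^[k] ω) := by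
          rw [hG, tailSup]
          exact le_iSup₂ (f := fun j (_ : N ≤ j) =>
            ENNReal.ofReal |g j (T^[k] ω) - g0 (T^[k] ω)|) k (not_lt.mp hk)
        calc |g k (T^[k] ω) - g0 (T^[k] ω)|
            = (ENNReal.ofReal |g k (T^[k] ω) - g0 (T^[k] ω)|).toReal :=
              (ENNReal.toReal_ofReal (abs_nonneg _)).symm
          _ ≤ (G N (T^[k] ω)).toReal := ENNReal.toReal_mono (hfinω N k) hle
    have hsum : ∑ k ∈ Finset.range n, |g k (T^[k] ω) - g0 (T^[k] ω)|
        ≤ C + birkhoffSum T (G' N) n ω := by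
      calc ∑ k ∈ Finset.range n, |g k (T^[k] ω) - g0 (T^[k] ω)|
          ≤ ∑ k ∈ Finset.range n, ((if k < N then |g k (T^[k] ω) - g0 (T^[k] ω)| else 0)
              + G' N (T^[k] ω)) := Finset.sum_le_sum fun k _ => key k
        _ = (∑ k ∈ Finset.range n, if k < N then |g k (T^[k] ω) - g0 (T^[k] ω)| else 0)
              + birkhoffSum T (G' N) n ω := Finset.sum_add_distrib
        _ ≤ C + birkhoffSum T (G' N) n ω := by
            refine add_le_add_left ?_ _
            rw [← Finset.sum_filter]
            refine Finset.sum_le_sum_of_subset_of_nonneg ?_ (fun k _ _ => abs_nonneg _)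
            intro k hk
            simp only [Finset.mem_filter, Finset.mem_range] at hk
            exact Finset.mem_range.mpr hk.2
    have habs : |D n| ≤ C / n + birkhoffSum T (G' N) n ω / n := by
      rw [hD]
      calc |(∑ k ∈ Finset.range n, (g k (T^[k] ω) - g0 (T^[k] ω))) / n|
          = |∑ k ∈ Finset.range n, (g k (T^[k] ω) - g0 (T^[k] ω))| / n := by
            rw [abs_div, abs_of_pos hnpos]
        _ ≤ (∑ k ∈ Finset.range n, |g k (T^[k] ω) - g0 (T^[k] ω)|) / n := by
            gcongr
            exact Finset.abs_sum_le_sum_abs _ _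
        _ ≤ (C + birkhoffSum T (G' N) n ω) / n := by gcongr
        _ = C / n + birkhoffSum T (G' N) n ω / n := add_div _ _ _
    have hb2 := hn2 n (le_trans (le_trans (le_max_left _ _) (le_max_right 1 _)) hn)
    have hb3 := hn3 n (le_trans (le_trans (le_max_right _ _) (le_max_right 1 _)) hn)
    rw [Real.dist_eq, sub_zero]
    calc |D n| ≤ C / n + birkhoffSum T (G' N) n ω / n := habs
      _ < ε / 3 + 2 * ε / 3 := add_lt_add hb3 hb2
      _ = ε := by ring
  have := h0.add hDtend
  rw [add_zero] at this
  exact this.congr fun n => (hdecomp n).symm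

end
end
end

section
/- Let (Ω, F, P) be a probability space, T : Ω → Ω a measure-preserving ergodic transformation, and let g_k, g : Ω → [0,∞) be integrable functions with g_k → g P-almost everywhere such that the sequence G_N(ω) := sup_{k ≥ N} |g_k(ω) − g(ω)| (N = 1, 2, …) is uniformly integrable. Then for P-almost every ω, (1/n) Σ_{k=0}^{n−1} (g_k(T^k ω) − g(T^k ω)) → 0 as n → ∞; more precisely, for every N, limsup_{n→∞} |(1/n) Σ_{k=0}^{n−1} (g_k(T^k ω) − g(T^k ω))| ≤ ∫ G_N dP for P-almost every ω. -/
set_option linter.unusedSectionVars false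
set_option linter.unnecessarySimpa false
set_option linter.unusedVariables false
set_option maxHeartbeats 1000000


open MeasureTheory ENNReal Filter Topology

noncomputable section

section Aux

variable {Ω : Type*} [MeasurableSpace Ω]

/-- Running maxima of Birkhoff sums (including the zeroth sum `0`). -/
def maxBS (T : Ω → Ω) (φ : Ω → ℝ) : ℕ → Ω → ℝ
  | 0 => fun _ => 0
  | N + 1 => fun ω => max (maxBS T φ N ω) (birkhoffSum T φ (N + 1) ω)

variable {T : Ω → Ω} {φ : Ω → ℝ}

lemma maxBS_nonneg (N : ℕ) (ω : Ω) : 0 ≤ maxBS T φ N ω := by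
  induction N with
  | zero => simp [maxBS]
  | succ N ih => exact le_trans ih (le_max_left _ _)

lemma maxBS_mono {N M : ℕ} (h : N ≤ M) (ω : Ω) : maxBS T φ N ω ≤ maxBS T φ M ω := by
  induction M with
  | zero => simpa [Nat.le_zero.mp h] using le_refl _
  | succ M ih =>
      rcases Nat.lt_succ_iff_lt_or_eq.mp (Nat.lt_succ_of_le h) with h' | h'
      · exact le_trans (ih (Nat.lt_succ_iff.mp h')) (le_max_left _ _)
      · subst h'; exact le_refl _

lemma birkhoffSum_le_maxBS {n N : ℕ} (h : n ≤ N) (ω : Ω) :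
    birkhoffSum T φ n ω ≤ maxBS T φ N ω := by
  induction N with
  | zero => simp [Nat.le_zero.mp h, maxBS, birkhoffSum_zero]
  | succ N ih =>
      rcases Nat.lt_succ_iff_lt_or_eq.mp (Nat.lt_succ_of_le h) with h' | h'
      · exact le_trans (ih (Nat.lt_succ_iff.mp h')) (le_max_left _ _)
      · subst h'; exact le_max_right _ _

lemma maxBS_succ_le (N : ℕ) (ω : Ω) :
    maxBS T φ (N + 1) ω ≤ max 0 (φ ω + maxBS T φ N (T ω)) := by
  induction N with
  | zero =>
      simp only [maxBS, birkhoffSum_one]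
      exact max_le (le_max_left _ _) (le_max_of_le_right (by simp))
  | succ N ih =>
      refine max_le (le_trans ih ?_) ?_
      · exact max_le_max (le_refl 0) (by gcongr; exact maxBS_mono (Nat.le_succ N) _)
      · refine le_max_of_le_right ?_
        rw [birkhoffSum_succ']
        gcongr
        exact birkhoffSum_le_maxBS (le_refl _) _

lemma measurable_birkhoffSum (hT : Measurable T) (hφ : Measurable φ) (n : ℕ) :
    Measurable (birkhoffSum T φ n) := by
  apply Finset.measurable_sum
  intro k _
  exact hφ.comp (hT.iterate k)

lemma measurable_maxBS (hT : Measurable T) (hφ : Measurable φ) (N : ℕ) :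
    Measurable (maxBS T φ N) := by
  induction N with
  | zero => simpa [maxBS] using measurable_const
  | succ N ih => exact Measurable.max ih (measurable_birkhoffSum hT hφ (N + 1))

lemma integrable_birkhoffSum {P : Measure Ω} (hT : MeasurePreserving T P P)
    (hφi : Integrable φ P) (n : ℕ) : Integrable (birkhoffSum T φ n) P := by
  have : (birkhoffSum T φ n) = fun ω => ∑ k ∈ Finset.range n, (φ ∘ T^[k]) ω := rfl
  rw [this]
  apply integrable_finset_sum
  intro k _
  exact ((hT.iterate k).integrable_comp hφi.aestronglyMeasurable).mpr hφi

lemma integrable_maxBS {P : Measure Ω} (hT : MeasurePreserving T P P)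
    (hφi : Integrable φ P) (N : ℕ) : Integrable (maxBS T φ N) P := by
  induction N with
  | zero => simpa [maxBS] using integrable_const (0 : ℝ)
  | succ N ih =>
      have : maxBS T φ (N + 1) = (maxBS T φ N) ⊔ (birkhoffSum T φ (N + 1)) := by
        funext ω; simp [maxBS]
      rw [this]
      exact ih.sup (integrable_birkhoffSum hT hφi (N + 1))


/-- **Maximal ergodic theorem** (Garsia's proof). -/
lemma maximal_ergodic {P : Measure Ω} [IsProbabilityMeasure P]
    (hT : MeasurePreserving T P P) (hφm : Measurable φ) (hφi : Integrable φ P) :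
    0 ≤ ∫ ω in ⋃ N, {ω | 0 < maxBS T φ N ω}, φ ω ∂P := by
  set A : ℕ → Set Ω := fun N => {ω | 0 < maxBS T φ N ω} with hA
  have hAm : ∀ N, MeasurableSet (A N) :=
    fun N => measurableSet_lt measurable_const (measurable_maxBS hT.measurable hφm N)
  have hAmono : Monotone A := by
    intro N M h ω hω
    exact lt_of_lt_of_le hω (maxBS_mono h ω)
  -- the integral of maxBS ∘ T equals integral of maxBS
  have hcomp : ∀ N, ∫ ω, maxBS T φ N (T ω) ∂P = ∫ ω, maxBS T φ N ω ∂P := by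
    intro N
    calc ∫ ω, maxBS T φ N (T ω) ∂P
        = ∫ ω, maxBS T φ N ω ∂(Measure.map T P) := by
          rw [integral_map hT.measurable.aemeasurable
            ((measurable_maxBS hT.measurable hφm N).aestronglyMeasurable)]
      _ = ∫ ω, maxBS T φ N ω ∂P := by rw [hT.map_eq]
  -- key step
  have hstep : ∀ N, 0 ≤ ∫ ω in A N, φ ω ∂P := by
    intro N
    cases N with
    | zero =>
        have : A 0 = ∅ := by
          ext ω; simp [hA, maxBS]
        simp [this]
    | succ N =>
        have hint1 : Integrable (maxBS T φ (N + 1)) P := integrable_maxBS hT hφi (N + 1)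
        have hint2 : Integrable (fun ω => maxBS T φ N (T ω)) P :=
          ((hT.integrable_comp (integrable_maxBS hT hφi N).aestronglyMeasurable).mpr
            (integrable_maxBS hT hφi N))
        have h1 : ∫ ω in A (N + 1), (maxBS T φ (N + 1) ω - maxBS T φ N (T ω)) ∂P
            ≤ ∫ ω in A (N + 1), φ ω ∂P := by
          refine setIntegral_mono_on (hint1.sub hint2).integrableOn hφi.integrableOn
            (hAm (N + 1)) ?_
          intro ω hω
          have h2 := maxBS_succ_le (T := T) (φ := φ) N ω
          have hpos : (0:ℝ) < maxBS T φ (N + 1) ω := hω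
          have : maxBS T φ (N + 1) ω ≤ φ ω + maxBS T φ N (T ω) := by
            rcases max_cases (0:ℝ) (φ ω + maxBS T φ N (T ω)) with ⟨he, hle⟩ | ⟨he, hle⟩
            · rw [he] at h2; linarith
            · rwa [he] at h2
          linarith
        have h3 : ∫ ω in A (N + 1), (maxBS T φ (N + 1) ω - maxBS T φ N (T ω)) ∂P
            = ∫ ω in A (N + 1), maxBS T φ (N + 1) ω ∂P
              - ∫ ω in A (N + 1), maxBS T φ N (T ω) ∂P :=
          integral_sub hint1.integrableOn hint2.integrableOn
        have h4 : ∫ ω in A (N + 1), maxBS T φ (N + 1) ω ∂P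
            = ∫ ω, maxBS T φ (N + 1) ω ∂P := by
          rw [← integral_add_compl (hAm (N + 1)) hint1]
          have : ∫ ω in (A (N + 1))ᶜ, maxBS T φ (N + 1) ω ∂P = 0 := by
            apply setIntegral_eq_zero_of_forall_eq_zero
            intro ω hω
            have : ¬ (0 < maxBS T φ (N + 1) ω) := hω
            exact le_antisymm (not_lt.mp this) (maxBS_nonneg _ _)
          rw [this, add_zero]
        have h5 : ∫ ω in A (N + 1), maxBS T φ N (T ω) ∂P
            ≤ ∫ ω, maxBS T φ N (T ω) ∂P :=
          setIntegral_le_integral hint2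
            (Filter.Eventually.of_forall fun ω => maxBS_nonneg _ _)
        have h6 : ∫ ω, maxBS T φ N ω ∂P ≤ ∫ ω, maxBS T φ (N + 1) ω ∂P :=
          integral_mono (integrable_maxBS hT hφi N) hint1
            (fun ω => maxBS_mono (Nat.le_succ N) ω)
        calc (0:ℝ) ≤ ∫ ω, maxBS T φ (N + 1) ω ∂P - ∫ ω, maxBS T φ N ω ∂P := by linarith
      _ ≤ ∫ ω in A (N + 1), maxBS T φ (N + 1) ω ∂P
            - ∫ ω in A (N + 1), maxBS T φ N (T ω) ∂P := by
            rw [h4, hcomp N] at *; linarith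
      _ = ∫ ω in A (N + 1), (maxBS T φ (N + 1) ω - maxBS T φ N (T ω)) ∂P := h3.symm
      _ ≤ ∫ ω in A (N + 1), φ ω ∂P := h1
  have hlim := tendsto_setIntegral_of_monotone hAm hAmono hφi.integrableOn
  exact ge_of_tendsto' hlim hstep

lemma ennreal_limsup_add_const (u : ℕ → ℝ≥0∞) (c : ℝ≥0∞) :
    limsup (fun n => u n + c) atTop = limsup u atTop + c :=
  (Monotone.map_limsSup_of_continuousAt (F := (atTop : Filter ℕ).map u) (f := fun x => x + c)
    (fun _ _ h => add_le_add_left h c) (continuous_add_right c).continuousAt).symm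

lemma limsup_add_ennreal_le {x y : ℕ → ℝ≥0∞} (hx : Tendsto x atTop (𝓝 0)) :
    limsup (fun n => x n + y n) atTop ≤ limsup y atTop := by
  refine ENNReal.le_of_forall_pos_le_add fun ε hε _ => ?_
  have hev : ∀ᶠ n in atTop, x n ≤ (ε : ℝ≥0∞) :=
    hx.eventually_le_const (by exact_mod_cast hε)
  calc limsup (fun n => x n + y n) atTop ≤ limsup (fun n => y n + (ε : ℝ≥0∞)) atTop := by
        refine limsup_le_limsup ?_ (by isBoundedDefault) (by isBoundedDefault)
        filter_upwards [hev] with n hn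
        calc x n + y n ≤ (ε : ℝ≥0∞) + y n := add_le_add_left hn _
          _ = y n + (ε : ℝ≥0∞) := add_comm _ _
    _ = limsup y atTop + (ε : ℝ≥0∞) := ennreal_limsup_add_const y ε

/-- Upper bound half of the Birkhoff ergodic theorem for an ergodic transformation. -/
lemma birkhoff_limsup_le {P : Measure Ω} [IsProbabilityMeasure P]
    (hT : Ergodic T P) {f : Ω → ℝ} (hfm : Measurable f) (hfi : Integrable f P)
    (hf0 : ∀ ω, 0 ≤ f ω) :
    ∀ᵐ ω ∂P, limsup (fun n : ℕ => ENNReal.ofReal (birkhoffSum T f n ω / n)) atTop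
      ≤ ENNReal.ofReal (∫ x, f x ∂P) := by
  set F : Ω → ℝ≥0∞ :=
    fun ω => limsup (fun n : ℕ => ENNReal.ofReal (birkhoffSum T f n ω / n)) atTop with hF
  have hS0 : ∀ (n : ℕ) (ω : Ω), 0 ≤ birkhoffSum T f n ω :=
    fun n ω => Finset.sum_nonneg fun k _ => hf0 _
  have hFm : Measurable F :=
    Measurable.limsup fun n =>
      ((measurable_birkhoffSum hT.measurable hfm n).div_const _).ennreal_ofReal
  -- sub-invariance of F
  have hFinv : ∀ ω, F ω ≤ F (T ω) := by
    intro ω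
    have h1 : F ω
        = limsup (fun n : ℕ =>
            ENNReal.ofReal (birkhoffSum T f (n + 1) ω / (((n + 1 : ℕ) : ℝ)))) atTop :=
      (limsup_nat_add (fun n : ℕ => ENNReal.ofReal (birkhoffSum T f n ω / (n:ℝ))) 1).symm
    have h2 : ∀ n : ℕ, 1 ≤ n →
        ENNReal.ofReal (birkhoffSum T f (n + 1) ω / (((n + 1 : ℕ) : ℝ)))
        ≤ ENNReal.ofReal (f ω / (((n + 1 : ℕ) : ℝ)))
          + ENNReal.ofReal (birkhoffSum T f n (T ω) / (n:ℝ)) := by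
      intro n hn
      have hn' : (0:ℝ) < n := by exact_mod_cast hn
      have hcast : ((n + 1 : ℕ) : ℝ) = (n : ℝ) + 1 := by push_cast; ring
      have hrec : birkhoffSum T f (n + 1) ω / (((n + 1 : ℕ) : ℝ))
          = f ω / (((n + 1 : ℕ) : ℝ)) + birkhoffSum T f n (T ω) / (((n + 1 : ℕ) : ℝ)) := by
        rw [birkhoffSum_succ', add_div]
      rw [hrec]
      refine le_trans ENNReal.ofReal_add_le (add_le_add_right ?_ _)
      apply ENNReal.ofReal_le_ofReal
      exact div_le_div_of_nonneg_left (hS0 n (T ω)) hn' (by rw [hcast]; linarith)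
    have hx : Tendsto (fun n : ℕ => ENNReal.ofReal (f ω / (((n + 1 : ℕ) : ℝ)))) atTop
        (𝓝 0) := by
      have h0 : Tendsto (fun n : ℕ => f ω / (((n + 1 : ℕ) : ℝ))) atTop (𝓝 0) :=
        (tendsto_const_div_atTop_nhds_zero_nat (f ω)).comp (tendsto_add_atTop_nat 1)
      have h1 := (ENNReal.continuous_ofReal.continuousAt (x := (0:ℝ))).tendsto.comp h0
      simpa [Function.comp_def] using h1
    calc F ω = limsup (fun n : ℕ =>
          ENNReal.ofReal (birkhoffSum T f (n + 1) ω / (((n + 1 : ℕ) : ℝ)))) atTop := h1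
      _ ≤ limsup (fun n : ℕ => ENNReal.ofReal (f ω / (((n + 1 : ℕ) : ℝ)))
            + ENNReal.ofReal (birkhoffSum T f n (T ω) / (n:ℝ))) atTop := by
          refine limsup_le_limsup ?_ (by isBoundedDefault) (by isBoundedDefault)
          filter_upwards [eventually_ge_atTop 1] with n hn
          exact h2 n hn
      _ ≤ limsup (fun n : ℕ => ENNReal.ofReal (birkhoffSum T f n (T ω) / (n:ℝ))) atTop :=
          limsup_add_ennreal_le hx
      _ = F (T ω) := rfl
  -- for every rational above the mean, F ≤ q a.e.
  have hae : ∀ᵐ ω ∂P, ∀ q : ℚ, (∫ x, f x ∂P) < (q:ℝ) → F ω ≤ ENNReal.ofReal (q:ℝ) := by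
    rw [ae_all_iff]
    intro q
    by_cases hq : (∫ x, f x ∂P) < (q:ℝ)
    swap
    · exact Filter.Eventually.of_forall fun ω h => absurd h hq
    set s : Set Ω := {ω | ENNReal.ofReal (q:ℝ) < F ω} with hs
    have hsm : MeasurableSet s := measurableSet_lt measurable_const hFm
    have hsub : s ≤ᵐ[P] T ⁻¹' s := by
      apply HasSubset.Subset.eventuallyLE
      intro ω hω
      exact lt_of_lt_of_le hω (hFinv ω)
    rcases hT.ae_empty_or_univ_of_ae_le_preimage hsm.nullMeasurableSet hsub with hemp | huniv
    · -- s is a.e. empty: done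
      have hP0 : P s = 0 := by simpa using measure_congr hemp
      have := (MeasureTheory.measure_eq_zero_iff_ae_notMem (μ := P) (s := s)).mp hP0
      filter_upwards [this] with ω hω _
      simpa [hs, Set.mem_setOf_eq] using not_lt.mp (by simpa [hs] using hω)
    · -- s is a.e. everything: contradiction with the maximal ergodic theorem
      exfalso
      set φq : Ω → ℝ := fun ω => f ω - q with hφq
      have hφqm : Measurable φq := hfm.sub measurable_const
      have hφqi : Integrable φq P := hfi.sub (integrable_const _)
      set D : Set Ω := ⋃ N, {ω | 0 < maxBS T φq N ω} with hD
      have hDm : MeasurableSet D := MeasurableSet.iUnion fun N =>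
        measurableSet_lt measurable_const (measurable_maxBS hT.measurable hφqm N)
      have hbs : ∀ (n : ℕ) (ω : Ω), birkhoffSum T φq n ω
          = birkhoffSum T f n ω - n * q := by
        intro n ω
        simp only [birkhoffSum, hφq, Finset.sum_sub_distrib, Finset.sum_const,
          Finset.card_range, nsmul_eq_mul]
      have hsubD : s ⊆ D := by
        intro ω hω
        have hq' : ENNReal.ofReal (q:ℝ) < F ω := hω
        by_contra hmem
        -- then all maxBS ≤ 0, so all birkhoff sums (n ≥ 1) are ≤ n q
        have hall : ∀ n : ℕ, 1 ≤ n → birkhoffSum T f n ω ≤ n * q := by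
          intro n hn
          have h1 : ¬ (0 < maxBS T φq n ω) := by
            intro h1
            exact hmem (Set.mem_iUnion.mpr ⟨n, h1⟩)
          have h2 : birkhoffSum T φq n ω ≤ 0 :=
            le_trans (birkhoffSum_le_maxBS le_rfl ω) (not_lt.mp h1)
          rw [hbs] at h2; linarith
        have : F ω ≤ ENNReal.ofReal (q:ℝ) := by
          apply limsup_le_of_le
          · isBoundedDefault
          filter_upwards [eventually_ge_atTop 1] with n hn
          apply ENNReal.ofReal_le_ofReal
          have hn' : (0:ℝ) < n := by exact_mod_cast hn
          rw [div_le_iff₀ hn']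
          calc birkhoffSum T f n ω ≤ n * q := hall n hn
            _ = q * n := by ring
        exact absurd hq' (not_lt.mpr this)
      have hPs : P s = 1 := by
        have := measure_congr huniv
        simpa using this
      have hPD : P Dᶜ = 0 := by
        have h1 : (1:ℝ≥0∞) ≤ P D := hPs ▸ measure_mono hsubD
        have h2 : P D = 1 := le_antisymm prob_le_one h1
        rw [prob_compl_eq_zero_iff hDm]
        exact h2
      have hrestrict : P.restrict D = P := by
        apply Measure.restrict_eq_self_of_ae_mem
        change ∀ᵐ ω ∂P, ω ∈ D
        rw [ae_iff]
        exact hPD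
      have hmax := maximal_ergodic hT.toMeasurePreserving hφqm hφqi
      rw [← hD] at hmax
      have h7 : ∫ ω in D, φq ω ∂P = ∫ ω, φq ω ∂P := by rw [hrestrict]
      rw [h7] at hmax
      have : ∫ ω, φq ω ∂P = (∫ x, f x ∂P) - q := by
        rw [hφq]
        rw [integral_sub hfi (integrable_const _)]
        simp
      rw [this] at hmax
      linarith
  -- combine over rationals
  filter_upwards [hae] with ω hω
  by_contra hcon
  push_neg at hcon
  obtain ⟨q, hq0, h1, h2⟩ := ENNReal.lt_iff_exists_rat_btwn.mp hcon
  have hco : ((Real.toNNReal (q:ℝ)) : ℝ≥0∞) = ENNReal.ofReal (q:ℝ) := rfl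
  rw [hco] at h1 h2
  have hfq : (∫ x, f x ∂P) < (q:ℝ) :=
    (ENNReal.ofReal_lt_ofReal_iff_of_nonneg (integral_nonneg hf0)).mp h1
  exact absurd h2 (not_lt.mpr (hω q hfq))

end Aux


/-- **Vanishing of the averaged deviations.** Let `T` be a measure-preserving ergodic
transformation of a probability space `(Ω, F, P)` and `g_k, g : Ω → [0,∞)` integrable
nonnegative functions with `g_k → g` `P`-a.e. such that the tail suprema
`G_N(ω) = sup_{k ≥ N} |g_k(ω) − g(ω)|` are uniformly integrable. Then
`(1/n) Σ_{k<n} (g_k(T^k ω) − g(T^k ω)) → 0` for `P`-a.e. `ω`; more precisely, for every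
`N`, `limsup_n |(1/n) Σ_{k<n} (g_k(T^k ω) − g(T^k ω))| ≤ ∫ G_N dP` for `P`-a.e. `ω`. -/
theorem averaged_deviations_vanish
    {Ω : Type*} [MeasurableSpace Ω] (P : Measure Ω) [IsProbabilityMeasure P]
    (T : Ω → Ω) (hT : Ergodic T P)
    (g : ℕ → Ω → ℝ) (g0 : Ω → ℝ)
    (hg_meas : ∀ n, Measurable (g n)) (hg0_meas : Measurable g0)
    (hg_nonneg : ∀ n ω, 0 ≤ g n ω) (hg0_nonneg : ∀ ω, 0 ≤ g0 ω)
    (hg_int : ∀ n, Integrable (g n) P) (hg0_int : Integrable g0 P)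
    (hconv : ∀ᵐ ω ∂P, Tendsto (fun n => g n ω) atTop (𝓝 (g0 ω)))
    (hUI : UnifIntENN P (tailSup g g0)) :
    (∀ᵐ ω ∂P, Tendsto
      (fun n : ℕ => (∑ k ∈ Finset.range n, (g k (T^[k] ω) - g0 (T^[k] ω))) / n)
      atTop (𝓝 0))
    ∧ ∀ N : ℕ, ∀ᵐ ω ∂P,
        limsup (fun n : ℕ => ENNReal.ofReal
            |(∑ k ∈ Finset.range n, (g k (T^[k] ω) - g0 (T^[k] ω))) / n|) atTop
          ≤ ∫⁻ ω', tailSup g g0 N ω' ∂P := by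
  set G : ℕ → Ω → ℝ≥0∞ := tailSup g g0 with hG
  have hGm : ∀ N, Measurable (G N) := by
    intro N
    apply Measurable.iSup
    intro k
    apply Measurable.iSup
    intro _
    exact (((hg_meas k).sub hg0_meas).abs).ennreal_ofReal
  have hGanti : ∀ {N M : ℕ}, N ≤ M → ∀ ω, G M ω ≤ G N ω := by
    intro N M h ω
    refine iSup₂_le fun k hk => ?_
    exact le_iSup₂ (f := fun k (_ : N ≤ k) => ENNReal.ofReal |g k ω - g0 ω|) k (h.trans hk)
  -- finiteness of the integrals of the tail suprema, from uniform integrability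
  have hGfin : ∀ N, ∫⁻ ω, G N ω ∂P < ∞ := by
    obtain ⟨α, hα⟩ :=
      (hUI.eventually_le_const (by norm_num : (0:ℝ≥0∞) < 1)).exists
    intro N
    have hs : MeasurableSet {ω | ENNReal.ofReal α < G N ω} :=
      measurableSet_lt measurable_const (hGm N)
    rw [← lintegral_add_compl (G N) hs]
    have h1 : ∫⁻ ω in {ω | ENNReal.ofReal α < G N ω}, G N ω ∂P ≤ 1 :=
      le_trans (le_iSup (fun N => ∫⁻ ω in {ω | ENNReal.ofReal α < G N ω}, G N ω ∂P) N) hα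
    have h2 : ∫⁻ ω in {ω | ENNReal.ofReal α < G N ω}ᶜ, G N ω ∂P ≤ ENNReal.ofReal α := by
      calc ∫⁻ ω in {ω | ENNReal.ofReal α < G N ω}ᶜ, G N ω ∂P
          ≤ ∫⁻ _ in {ω | ENNReal.ofReal α < G N ω}ᶜ, ENNReal.ofReal α ∂P := by
            refine setLIntegral_mono measurable_const fun ω hω => ?_
            exact not_lt.mp hω
        _ = ENNReal.ofReal α * P {ω | ENNReal.ofReal α < G N ω}ᶜ := setLIntegral_const _ _
        _ ≤ ENNReal.ofReal α * 1 := by gcongr; exact prob_le_one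
        _ = ENNReal.ofReal α := mul_one _
    calc ∫⁻ ω in {ω | ENNReal.ofReal α < G N ω}, G N ω ∂P
          + ∫⁻ ω in {ω | ENNReal.ofReal α < G N ω}ᶜ, G N ω ∂P
        ≤ 1 + ENNReal.ofReal α := add_le_add h1 h2
      _ < ∞ := by simp [ENNReal.add_lt_top]
  have hGlt : ∀ N, ∀ᵐ ω ∂P, G N ω < ∞ := fun N => ae_lt_top (hGm N) (hGfin N).ne
  -- the real-valued dominating functions
  set h : ℕ → Ω → ℝ := fun N ω => (G N ω).toReal with hh
  have hhm : ∀ N, Measurable (h N) := fun N => (hGm N).ennreal_toReal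
  have hh0 : ∀ N ω, 0 ≤ h N ω := fun N ω => ENNReal.toReal_nonneg
  have hhi : ∀ N, Integrable (h N) P := fun N =>
    integrable_toReal_of_lintegral_ne_top (hGm N).aemeasurable (hGfin N).ne
  have hOfInt : ∀ N, ENNReal.ofReal (∫ ω, h N ω ∂P) = ∫⁻ ω, G N ω ∂P := by
    intro N
    rw [ofReal_integral_eq_lintegral_ofReal (hhi N)
      (Filter.Eventually.of_forall fun ω => hh0 N ω)]
    apply lintegral_congr_ae
    filter_upwards [hGlt N] with ω hω
    exact ENNReal.ofReal_toReal hω.ne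
  -- pull back the tail bound along the iterates of T
  have hpull : ∀ N : ℕ, ∀ᵐ ω ∂P, ∀ j k : ℕ, N ≤ k →
      |g k (T^[j] ω) - g0 (T^[j] ω)| ≤ h N (T^[j] ω) := by
    intro N
    have base : ∀ᵐ ω ∂P, ∀ k : ℕ, N ≤ k → |g k ω - g0 ω| ≤ h N ω := by
      filter_upwards [hGlt N] with ω hω k hk
      have h1 : ENNReal.ofReal |g k ω - g0 ω| ≤ G N ω :=
        le_iSup₂ (f := fun k (_ : N ≤ k) => ENNReal.ofReal |g k ω - g0 ω|) k hk
      calc |g k ω - g0 ω| = (ENNReal.ofReal |g k ω - g0 ω|).toReal :=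
            (ENNReal.toReal_ofReal (abs_nonneg _)).symm
        _ ≤ (G N ω).toReal := ENNReal.toReal_mono hω.ne h1
    rw [ae_all_iff]
    intro j
    exact (hT.toMeasurePreserving.iterate j).quasiMeasurePreserving.ae base
  -- part 2 for each N
  have haeN : ∀ N : ℕ, ∀ᵐ ω ∂P,
      limsup (fun n : ℕ => ENNReal.ofReal
          |(∑ k ∈ Finset.range n, (g k (T^[k] ω) - g0 (T^[k] ω))) / n|) atTop
        ≤ ∫⁻ ω', G N ω' ∂P := by
    intro N
    filter_upwards [birkhoff_limsup_le hT (hhm N) (hhi N) (hh0 N), hpull N] with ω hB hp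
    set d : ℕ → ℝ := fun k => g k (T^[k] ω) - g0 (T^[k] ω) with hd
    set C : ℝ := ∑ k ∈ Finset.range N, |d k| with hC
    have hC0 : 0 ≤ C := Finset.sum_nonneg fun k _ => abs_nonneg _
    have key : ∀ n : ℕ, |∑ k ∈ Finset.range n, d k| ≤ C + birkhoffSum T (h N) n ω := by
      intro n
      refine le_trans (Finset.abs_sum_le_sum_abs _ _) ?_
      set b : ℕ → ℝ := fun k => if k < N then |d k| else 0 with hb
      have hb0 : ∀ k, 0 ≤ b k := by
        intro k; rw [hb]; dsimp only; split
        · exact abs_nonneg _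
        · exact le_refl 0
      have hterm : ∀ k ∈ Finset.range n, |d k| ≤ b k + h N (T^[k] ω) := by
        intro k _
        by_cases hk : k < N
        · rw [hb]; dsimp only; rw [if_pos hk]
          exact le_add_of_nonneg_right (hh0 N _)
        · rw [hb]; dsimp only; rw [if_neg hk, zero_add]
          exact hp k k (not_lt.mp hk)
      have hsum1 : ∑ k ∈ Finset.range n, |d k|
          ≤ (∑ k ∈ Finset.range n, b k) + birkhoffSum T (h N) n ω := by
        rw [show birkhoffSum T (h N) n ω = ∑ k ∈ Finset.range n, h N (T^[k] ω) from rfl,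
          ← Finset.sum_add_distrib]
        exact Finset.sum_le_sum hterm
      have hsum2 : ∑ k ∈ Finset.range n, b k ≤ C := by
        calc ∑ k ∈ Finset.range n, b k ≤ ∑ k ∈ Finset.range (max n N), b k :=
              Finset.sum_le_sum_of_subset_of_nonneg
                (Finset.range_subset_range.mpr (le_max_left n N)) fun k _ _ => hb0 k
          _ = ∑ k ∈ Finset.range N, b k :=
              (Finset.sum_subset (Finset.range_subset_range.mpr (le_max_right n N))
                fun k _ hk => by
                  rw [hb]; dsimp only
                  exact if_neg (fun h' => hk (Finset.mem_range.mpr h'))).symm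
          _ = C := Finset.sum_congr rfl fun k hk => by
              rw [hb]; dsimp only
              exact if_pos (Finset.mem_range.mp hk)
      linarith
    have hx : Tendsto (fun n : ℕ => ENNReal.ofReal (C / (n:ℝ))) atTop (𝓝 0) := by
      have h0 := tendsto_const_div_atTop_nhds_zero_nat C
      have h1 := (ENNReal.continuous_ofReal.continuousAt (x := (0:ℝ))).tendsto.comp h0
      simpa [Function.comp_def] using h1
    calc limsup (fun n : ℕ => ENNReal.ofReal
            |(∑ k ∈ Finset.range n, (g k (T^[k] ω) - g0 (T^[k] ω))) / n|) atTop
        ≤ limsup (fun n : ℕ => ENNReal.ofReal (C / (n:ℝ))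
            + ENNReal.ofReal (birkhoffSum T (h N) n ω / n)) atTop := by
          refine limsup_le_limsup ?_ (by isBoundedDefault) (by isBoundedDefault)
          filter_upwards [eventually_ge_atTop 1] with n hn
          have hn' : (0:ℝ) < n := by exact_mod_cast hn
          have hB0 : 0 ≤ birkhoffSum T (h N) n ω := Finset.sum_nonneg fun k _ => hh0 N _
          have habs : |(∑ k ∈ Finset.range n, d k) / (n:ℝ)|
              ≤ C / n + birkhoffSum T (h N) n ω / n := by
            rw [abs_div, abs_of_pos hn', ← add_div]
            gcongr
            exact key n
          calc ENNReal.ofReal |(∑ k ∈ Finset.range n, (g k (T^[k] ω) - g0 (T^[k] ω))) / n|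
              ≤ ENNReal.ofReal (C / n + birkhoffSum T (h N) n ω / n) :=
                ENNReal.ofReal_le_ofReal habs
            _ = ENNReal.ofReal (C / (n:ℝ)) + ENNReal.ofReal (birkhoffSum T (h N) n ω / n) :=
                ENNReal.ofReal_add (div_nonneg hC0 hn'.le) (div_nonneg hB0 hn'.le)
      _ ≤ limsup (fun n : ℕ => ENNReal.ofReal (birkhoffSum T (h N) n ω / n)) atTop :=
          limsup_add_ennreal_le hx
      _ ≤ ENNReal.ofReal (∫ x, h N x ∂P) := hB
      _ = ∫⁻ ω', G N ω' ∂P := hOfInt N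
  refine ⟨?_, haeN⟩
  -- the tail integrals tend to zero
  have hG0 : ∀ᵐ ω ∂P, Tendsto (fun N => G N ω) atTop (𝓝 0) := by
    filter_upwards [hconv] with ω hω
    rw [ENNReal.tendsto_nhds_zero]
    intro ε hε
    obtain ⟨r, hr0, hrε⟩ : ∃ r : ℝ, 0 < r ∧ ENNReal.ofReal r ≤ ε := by
      rcases eq_or_ne ε ∞ with hε' | hε'
      · exact ⟨1, one_pos, by simp [hε']⟩
      · exact ⟨ε.toReal, ENNReal.toReal_pos hε.ne' hε',
          le_of_eq (ENNReal.ofReal_toReal hε')⟩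
    obtain ⟨M, hM⟩ := Metric.tendsto_atTop.mp hω r hr0
    filter_upwards [eventually_ge_atTop M] with N hN
    refine le_trans ?_ hrε
    refine iSup₂_le fun k hk => ?_
    apply ENNReal.ofReal_le_ofReal
    have := hM k (le_trans hN hk)
    rw [Real.dist_eq] at this
    exact this.le
  have hGto0 : Tendsto (fun N => ∫⁻ ω, G N ω ∂P) atTop (𝓝 0) := by
    have h0 := tendsto_lintegral_of_dominated_convergence (G 0) hGm
      (fun N => Filter.Eventually.of_forall fun ω => hGanti (Nat.zero_le N) ω)
      (hGfin 0).ne hG0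
    simpa using h0
  filter_upwards [ae_all_iff.mpr haeN] with ω hω
  set u : ℕ → ℝ≥0∞ := fun n => ENNReal.ofReal
      |(∑ k ∈ Finset.range n, (g k (T^[k] ω) - g0 (T^[k] ω))) / n| with hu
  have hlim0 : limsup u atTop = 0 :=
    le_antisymm (ge_of_tendsto hGto0 (Filter.Eventually.of_forall hω)) zero_le
  have htend : Tendsto u atTop (𝓝 0) := by
    refine tendsto_of_le_liminf_of_limsup_le ?_ hlim0.le (by isBoundedDefault)
      (by isBoundedDefault)
    exact zero_le
  have htend2 : Tendsto (fun n : ℕ =>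
      |(∑ k ∈ Finset.range n, (g k (T^[k] ω) - g0 (T^[k] ω))) / n|) atTop (𝓝 0) := by
    have h2 := (ENNReal.tendsto_toReal (by simp : (0:ℝ≥0∞) ≠ ∞)).comp htend
    simp only [Function.comp_def, hu, ENNReal.toReal_ofReal (abs_nonneg _),
      ENNReal.toReal_zero] at h2
    exact h2
  exact squeeze_zero_norm (fun n => le_of_eq (Real.norm_eq_abs _)) htend2

end
end

section
/- Let P be a shift-invariant Borel probability measure on the two-sided binary sequence space Σ^ℤ (Σ = {0,1}). For k ≥ 1 let q_k : Σ^ℤ → [0,1] be a version of the conditional probability P(ω_0 = 0 | ω_{−k}, …, ω_{−1}), and define the conditional log-loss g_k(ω) = −log q_k(ω) if ω_0 = 0 and g_k(ω) = −log(1 − q_k(ω)) if ω_0 = 1. Then for every r > 0, P({ω : sup_{k≥1} g_k(ω) ≥ r}) ≤ 2e^{−r}; consequently, sup_{k≥1} g_k is P-integrable. -/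
open MeasureTheory ENNReal Filter Topology

noncomputable section

/-- The left shift on two-sided binary sequences. -/
def shiftZ : (ℤ → Bool) → (ℤ → Bool) := fun ω i => ω (i + 1)

/-- The σ-algebra generated by the coordinates `ω_{−k}, …, ω_{−1}`. -/
def pastAlg (k : ℕ) : MeasurableSpace (ℤ → Bool) :=
  MeasurableSpace.comap (fun ω (i : Fin k) => ω (-(i.val : ℤ) - 1)) inferInstance

/-- The σ-algebra generated by the full past `ω_{−1}, ω_{−2}, …`. -/
def fullPastAlg : MeasurableSpace (ℤ → Bool) :=
  MeasurableSpace.comap (fun ω (i : ℕ) => ω (-(i : ℤ) - 1)) inferInstance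

/-- The indicator of the event `{ω₀ = 0}` (bit `0` is encoded as `false`). -/
def ind0 : (ℤ → Bool) → ℝ := fun ω => if ω 0 = false then 1 else 0

/-- `negLog x = −log x` valued in `[0,∞]`, with `−log x = ∞` for `x ≤ 0`. -/
noncomputable def negLog (x : ℝ) : ℝ≥0∞ := if x ≤ 0 then ⊤ else ENNReal.ofReal (-Real.log x)

/-- The conditional log-loss built from a conditional probability `q` of `{ω₀ = 0}`:
`−log q(ω)` if `ω₀ = 0` and `−log(1 − q(ω))` if `ω₀ = 1`. -/
noncomputable def logLossOf (q : (ℤ → Bool) → ℝ) (ω : ℤ → Bool) : ℝ≥0∞ :=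
  if ω 0 = false then negLog (q ω) else negLog (1 - q ω)

/-- The symmetric difference `|a − b|` in `[0,∞]` (via truncated subtraction). -/
def edev (a b : ℝ≥0∞) : ℝ≥0∞ := (a - b) ⊔ (b - a)

namespace LoglossAux

/-- Each past σ-algebra is a sub-σ-algebra of the ambient product σ-algebra. -/
lemma pastAlg_le (k : ℕ) : pastAlg k ≤ (inferInstance : MeasurableSpace (ℤ → Bool)) :=
  Measurable.comap_le (measurable_pi_lambda _ fun _ => measurable_pi_apply _)

lemma pastAlg_mono : Monotone pastAlg := by
  intro j k h
  have hco : (fun (ω : ℤ → Bool) (i : Fin j) => ω (-(i.val : ℤ) - 1))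
      = (fun (v : Fin k → Bool) (i : Fin j) => v (Fin.castLE h i))
        ∘ (fun (ω : ℤ → Bool) (i : Fin k) => ω (-(i.val : ℤ) - 1)) := rfl
  show MeasurableSpace.comap _ _ ≤ MeasurableSpace.comap _ _
  rw [hco, ← MeasurableSpace.comap_comp]
  exact MeasurableSpace.comap_mono
    (Measurable.comap_le (measurable_pi_lambda _ fun _ => measurable_pi_apply _))

/-- The event `{ω₀ = 0}`. -/
def A : Set (ℤ → Bool) := {ω | ω 0 = false}

lemma hA : MeasurableSet A := by
  have h : A = (fun ω : ℤ → Bool => ω 0) ⁻¹' {false} := rfl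
  rw [h]
  exact measurable_pi_apply 0 (measurableSet_singleton false)

lemma ind0_eq : ind0 = A.indicator (fun _ => (1 : ℝ)) := by
  funext ω
  by_cases h : ω 0 = false <;> simp [ind0, A, Set.indicator_apply, h]

lemma ind0_integrable (P : Measure (ℤ → Bool)) [IsProbabilityMeasure P] :
    Integrable ind0 P := by
  rw [ind0_eq]
  exact (integrable_const (1 : ℝ)).indicator hA

lemma le_negLog_iff {r x : ℝ} (hr : 0 < r) :
    ENNReal.ofReal r ≤ negLog x ↔ x ≤ Real.exp (-r) := by
  unfold negLog
  split_ifs with h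
  · simp only [le_top, true_iff]
    exact h.trans (Real.exp_pos _).le
  · push_neg at h
    constructor
    · intro hle
      have hrl : r ≤ -Real.log x := by
        by_contra hlt
        push_neg at hlt
        exact absurd hle (not_le.mpr ((ENNReal.ofReal_lt_ofReal_iff hr).mpr hlt))
      exact (Real.log_le_iff_le_exp h).mp (by linarith)
    · intro hxe
      have : Real.log x ≤ -r := (Real.log_le_iff_le_exp h).mpr hxe
      exact ENNReal.ofReal_le_ofReal (by linarith)

/-- Core maximal inequality: first-hitting-time decomposition. -/
lemma maximal_core (P : Measure (ℤ → Bool)) [IsProbabilityMeasure P] (t : ℝ)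
    (B : Set (ℤ → Bool)) (hB : MeasurableSet B)
    (f : ℕ → (ℤ → Bool) → ℝ)
    (hprog : ∀ k, Measurable[pastAlg (k + 1)] (f k))
    (hfint : ∀ k, Integrable (f k) P)
    (hkey : ∀ k (D : Set (ℤ → Bool)), MeasurableSet[pastAlg (k + 1)] D →
      (P (B ∩ D)).toReal ≤ ∫ ω in D, f k ω ∂P) :
    P (B ∩ ⋃ k : ℕ, {ω | f k ω ≤ t}) ≤ ENNReal.ofReal t := by
  classical
  set C : ℕ → Set (ℤ → Bool) := fun k => {ω | f k ω ≤ t} with hC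
  have hCmeas : ∀ k, MeasurableSet[pastAlg (k + 1)] (C k) := by
    intro k
    have h : C k = f k ⁻¹' Set.Iic t := rfl
    rw [h]
    exact hprog k measurableSet_Iic
  have hDmeas : ∀ k, MeasurableSet[pastAlg (k + 1)] (disjointed C k) := by
    intro k
    cases k with
    | zero => rw [disjointed_zero]; exact hCmeas 0
    | succ n =>
      rw [disjointed_add_one, partialSups_eq_biSup]
      refine ((hCmeas (n + 1)).diff ?_)
      simp only [Set.iSup_eq_iUnion]
      exact MeasurableSet.iUnion fun j => MeasurableSet.iUnion fun hj =>
        pastAlg_mono (by omega) _ (hCmeas j)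
  have hDmeas' : ∀ k, MeasurableSet (disjointed C k) :=
    fun k => pastAlg_le (k + 1) _ (hDmeas k)
  have hDsub : ∀ k, disjointed C k ⊆ C k := fun k => disjointed_le C k
  -- bound each piece
  have hpiece : ∀ k, P (B ∩ disjointed C k) ≤ ENNReal.ofReal t * P (disjointed C k) := by
    intro k
    have h1 : (P (B ∩ disjointed C k)).toReal ≤ ∫ ω in disjointed C k, f k ω ∂P :=
      hkey k _ (hDmeas k)
    have h2 : ∫ ω in disjointed C k, f k ω ∂P ≤ ∫ _ in disjointed C k, t ∂P := by
      refine setIntegral_mono_on ((hfint k).integrableOn) (integrableOn_const ?_)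
        (hDmeas' k) (fun ω hω => hDsub k hω)
      exact measure_ne_top P _
    have h3 : ∫ _ in disjointed C k, t ∂P = (P (disjointed C k)).toReal * t := by
      rw [setIntegral_const, smul_eq_mul, measureReal_def]
    have h4 : (P (B ∩ disjointed C k)).toReal ≤ t * (P (disjointed C k)).toReal := by
      rw [mul_comm]; exact h1.trans (h2.trans_eq h3)
    calc P (B ∩ disjointed C k)
        = ENNReal.ofReal ((P (B ∩ disjointed C k)).toReal) :=
          (ENNReal.ofReal_toReal (measure_ne_top P _)).symm
      _ ≤ ENNReal.ofReal (t * (P (disjointed C k)).toReal) := ENNReal.ofReal_le_ofReal h4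
      _ = ENNReal.ofReal t * ENNReal.ofReal ((P (disjointed C k)).toReal) := by
          rw [ENNReal.ofReal_mul']; exact ENNReal.toReal_nonneg
      _ = ENNReal.ofReal t * P (disjointed C k) := by
          rw [ENNReal.ofReal_toReal (measure_ne_top P _)]
  calc P (B ∩ ⋃ k : ℕ, C k)
      = P (B ∩ ⋃ k : ℕ, disjointed C k) := by rw [iUnion_disjointed]
    _ = P (⋃ k : ℕ, B ∩ disjointed C k) := by rw [Set.inter_iUnion]
    _ = ∑' k : ℕ, P (B ∩ disjointed C k) := by
        refine measure_iUnion ?_ (fun k => hB.inter (hDmeas' k))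
        exact fun i j hij => ((disjoint_disjointed C hij).mono
          Set.inter_subset_right Set.inter_subset_right)
    _ ≤ ∑' k : ℕ, ENNReal.ofReal t * P (disjointed C k) := ENNReal.tsum_le_tsum hpiece
    _ = ENNReal.ofReal t * ∑' k : ℕ, P (disjointed C k) := ENNReal.tsum_mul_left
    _ = ENNReal.ofReal t * P (⋃ k : ℕ, disjointed C k) := by
        rw [measure_iUnion (disjoint_disjointed C) hDmeas']
    _ ≤ ENNReal.ofReal t * 1 := by
        exact mul_le_mul_right (prob_le_one) _
    _ = ENNReal.ofReal t := mul_one _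

variable (P : Measure (ℤ → Bool)) [IsProbabilityMeasure P]

/-- The canonical (measurable) versions of the conditional probabilities. -/
def Q (k : ℕ) : (ℤ → Bool) → ℝ := P[ind0 | pastAlg k]

lemma Q_measurable (k : ℕ) : Measurable[pastAlg k] (Q P k) :=
  stronglyMeasurable_condExp.measurable

lemma Q_integrable (k : ℕ) : Integrable (Q P k) P := integrable_condExp

lemma key0 (k : ℕ) (D : Set (ℤ → Bool)) (hD : MeasurableSet[pastAlg (k + 1)] D) :
    (P (A ∩ D)).toReal = ∫ ω in D, Q P (k + 1) ω ∂P := by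
  rw [Q, setIntegral_condExp (pastAlg_le (k + 1)) (ind0_integrable P) hD]
  rw [ind0_eq, setIntegral_indicator hA, setIntegral_const, smul_eq_mul, mul_one,
    Set.inter_comm, measureReal_def]

lemma key1 (k : ℕ) (D : Set (ℤ → Bool)) (hD : MeasurableSet[pastAlg (k + 1)] D) :
    (P (Aᶜ ∩ D)).toReal = ∫ ω in D, (1 - Q P (k + 1) ω) ∂P := by
  have hDm : MeasurableSet D := pastAlg_le (k + 1) _ hD
  have hsplit : P (D ∩ A) + P (D \ A) = P D := measure_inter_add_diff D hA
  have h1 : ∫ ω in D, (1 - Q P (k + 1) ω) ∂P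
      = (P D).toReal - ∫ ω in D, Q P (k + 1) ω ∂P := by
    rw [integral_sub (integrableOn_const (C := (1:ℝ)) (measure_ne_top P _))
      ((Q_integrable P (k + 1)).integrableOn), setIntegral_const, smul_eq_mul, mul_one, measureReal_def]
  rw [h1, ← key0 P k D hD]
  have hAc : Aᶜ ∩ D = D \ A := by rw [Set.diff_eq, Set.inter_comm]
  have := ENNReal.toReal_add (measure_ne_top P (D ∩ A)) (measure_ne_top P (D \ A))
  rw [hsplit] at this
  rw [hAc, Set.inter_comm A D]
  linarith [this]

lemma side0 (t : ℝ) :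
    P (A ∩ ⋃ k : ℕ, {ω | Q P (k + 1) ω ≤ t}) ≤ ENNReal.ofReal t :=
  maximal_core P t A hA (fun k => Q P (k + 1))
    (fun k => Q_measurable P (k + 1)) (fun k => Q_integrable P (k + 1))
    (fun k D hD => (key0 P k D hD).le)

lemma side1 (t : ℝ) :
    P (Aᶜ ∩ ⋃ k : ℕ, {ω | 1 - Q P (k + 1) ω ≤ t}) ≤ ENNReal.ofReal t :=
  maximal_core P t Aᶜ hA.compl (fun k ω => 1 - Q P (k + 1) ω)
    (fun k => measurable_const.sub (Q_measurable P (k + 1)))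
    (fun k => (integrable_const (1 : ℝ)).sub (Q_integrable P (k + 1)))
    (fun k D hD => (key1 P k D hD).le)

/-- Pointwise layer-cake bound in `ℝ≥0∞`. -/
lemma le_tsum_indicator (a : ℝ≥0∞) :
    a ≤ ∑' n : ℕ, if (n : ℝ≥0∞) < a then (1 : ℝ≥0∞) else 0 := by
  classical
  by_cases ha : a = ⊤
  · subst ha
    have hterm : ∀ n : ℕ, (if (n : ℝ≥0∞) < ⊤ then (1 : ℝ≥0∞) else 0) = 1 := fun n => by
      rw [if_pos (ENNReal.natCast_lt_top n)]
    rw [tsum_congr hterm]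
    simp [ENNReal.tsum_const_eq_top_of_ne_zero]
  · obtain ⟨m, hm⟩ := ENNReal.exists_nat_gt ha
    have hex : ∃ n : ℕ, a ≤ (n : ℝ≥0∞) := ⟨m, hm.le⟩
    set m0 := Nat.find hex with hm0
    calc a ≤ (m0 : ℝ≥0∞) := Nat.find_spec hex
      _ = ∑ _j ∈ Finset.range m0, (1 : ℝ≥0∞) := by simp
      _ = ∑ j ∈ Finset.range m0, (if (j : ℝ≥0∞) < a then (1 : ℝ≥0∞) else 0) := by
          refine Finset.sum_congr rfl fun j hj => ?_
          rw [if_pos]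
          exact not_le.mp (Nat.find_min hex (Finset.mem_range.mp hj))
      _ ≤ ∑' n : ℕ, (if (n : ℝ≥0∞) < a then (1 : ℝ≥0∞) else 0) := ENNReal.sum_le_tsum _

end LoglossAux

open LoglossAux

/-- **Exponential tail bound for conditional log-losses.** Let `P` be a shift-invariant
probability measure on `{0,1}^ℤ` and, for `k ≥ 1`, let `q_k` be a version of the
conditional probability `P(ω₀ = 0 | ω_{−k}, …, ω_{−1})`, with conditional log-loss
`g_k(ω) = −log q_k(ω)` if `ω₀ = 0` and `−log(1 − q_k(ω))` if `ω₀ = 1`. Then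
`P(sup_{k≥1} g_k ≥ r) ≤ 2·e^{−r}` for every `r > 0`; consequently `sup_{k≥1} g_k` is
`P`-integrable. -/
theorem logloss_sup_tail_bound
    (P : Measure (ℤ → Bool)) [IsProbabilityMeasure P]
    (hstat : P.map shiftZ = P)
    (q : ℕ → (ℤ → Bool) → ℝ)
    (hq_range : ∀ k ω, q k ω ∈ Set.Icc (0:ℝ) 1)
    (hq : ∀ k, 1 ≤ k → q k =ᵐ[P] P[ind0 | pastAlg k]) :
    (∀ r : ℝ, 0 < r →
      P {ω | ENNReal.ofReal r ≤ ⨆ k : ℕ, ⨆ _ : 1 ≤ k, logLossOf (q k) ω}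
        ≤ ENNReal.ofReal (2 * Real.exp (-r)))
    ∧ (∫⁻ ω, (⨆ k : ℕ, ⨆ _ : 1 ≤ k, logLossOf (q k) ω) ∂P) ≠ ⊤ := by
  classical
  -- the bad null set
  set N : Set (ℤ → Bool) := {ω | ¬ ∀ k : ℕ, q (k + 1) ω = Q P (k + 1) ω} with hNdef
  have hN0 : P N = 0 := by
    have : ∀ᵐ ω ∂P, ∀ k : ℕ, q (k + 1) ω = Q P (k + 1) ω :=
      ae_all_iff.mpr fun k => hq (k + 1) (Nat.succ_le_succ (Nat.zero_le k))
    exact ae_iff.mp this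
  have part1 : ∀ r : ℝ, 0 < r →
      P {ω | ENNReal.ofReal r ≤ ⨆ k : ℕ, ⨆ _ : 1 ≤ k, logLossOf (q k) ω}
        ≤ ENNReal.ofReal (2 * Real.exp (-r)) := by
    intro r hr
    set S : Set (ℤ → Bool) :=
      {ω | ENNReal.ofReal r ≤ ⨆ k : ℕ, ⨆ _ : 1 ≤ k, logLossOf (q k) ω} with hSdef
    have hbound : ∀ s ∈ Set.Ioo (0:ℝ) r, P S ≤ ENNReal.ofReal (2 * Real.exp (-s)) := by
      intro s hs
      set t := Real.exp (-s) with htdef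
      set U : Set (ℤ → Bool) :=
        (A ∩ ⋃ k : ℕ, {ω | Q P (k + 1) ω ≤ t}) ∪
        (Aᶜ ∩ ⋃ k : ℕ, {ω | 1 - Q P (k + 1) ω ≤ t}) with hUdef
      have hsub : S ⊆ U ∪ N := by
        intro ω hω
        by_cases hωN : ω ∈ N
        · exact Or.inr hωN
        · left
          have heq : ∀ k : ℕ, q (k + 1) ω = Q P (k + 1) ω := not_not.mp hωN
          have hlt : ENNReal.ofReal s < ⨆ k : ℕ, ⨆ _ : 1 ≤ k, logLossOf (q k) ω :=
            lt_of_lt_of_le ((ENNReal.ofReal_lt_ofReal_iff hr).mpr hs.2) hω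
          rw [lt_iSup_iff] at hlt
          obtain ⟨k, hk⟩ := hlt
          rw [lt_iSup_iff] at hk
          obtain ⟨hk1, hklt⟩ := hk
          obtain ⟨m, rfl⟩ : ∃ m, k = m + 1 := ⟨k - 1, (Nat.succ_pred_eq_of_pos hk1).symm⟩
          have hkle : ENNReal.ofReal s ≤ logLossOf (q (m + 1)) ω := hklt.le
          by_cases hb : ω 0 = false
          · left
            refine ⟨hb, Set.mem_iUnion.mpr ⟨m, ?_⟩⟩
            have hll : negLog (q (m + 1) ω) = logLossOf (q (m + 1)) ω := by
              rw [logLossOf, if_pos hb]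
            show Q P (m + 1) ω ≤ t
            rw [← heq m]
            exact (le_negLog_iff hs.1).mp (hll ▸ hkle)
          · right
            refine ⟨hb, Set.mem_iUnion.mpr ⟨m, ?_⟩⟩
            have hll : negLog (1 - q (m + 1) ω) = logLossOf (q (m + 1)) ω := by
              rw [logLossOf, if_neg hb]
            have h2 : 1 - q (m + 1) ω ≤ t := (le_negLog_iff hs.1).mp (hll ▸ hkle)
            show 1 - Q P (m + 1) ω ≤ t
            rw [← heq m]
            exact h2
      calc P S ≤ P (U ∪ N) := measure_mono hsub
        _ ≤ P U + P N := measure_union_le U N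
        _ = P U := by rw [hN0, add_zero]
        _ ≤ ENNReal.ofReal t + ENNReal.ofReal t :=
            le_trans (measure_union_le _ _) (add_le_add (side0 P t) (side1 P t))
        _ = ENNReal.ofReal (2 * t) := by
            rw [two_mul, ENNReal.ofReal_add (Real.exp_pos _).le (Real.exp_pos _).le]
    have htend : Tendsto (fun s : ℝ => ENNReal.ofReal (2 * Real.exp (-s))) (𝓝[<] r)
        (𝓝 (ENNReal.ofReal (2 * Real.exp (-r)))) := by
      refine Tendsto.mono_left ?_ nhdsWithin_le_nhds
      exact (ENNReal.continuous_ofReal.comp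
        (continuous_const.mul (Real.continuous_exp.comp continuous_neg))).tendsto r
    refine ge_of_tendsto htend ?_
    exact Filter.eventually_of_mem (Ioo_mem_nhdsLT hr) fun s hs => hbound s hs
  refine ⟨part1, ?_⟩
  -- measurable version of the sup
  set G : (ℤ → Bool) → ℝ≥0∞ :=
    fun ω => ⨆ k : ℕ, ⨆ _ : 1 ≤ k, logLossOf (q k) ω with hGdef
  set G' : (ℤ → Bool) → ℝ≥0∞ :=
    fun ω => ⨆ k : ℕ, ⨆ _ : 1 ≤ k, logLossOf (Q P k) ω with hG'def
  have hnegLog_meas : Measurable negLog := by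
    unfold negLog
    exact Measurable.ite (measurableSet_le measurable_id measurable_const)
      measurable_const (ENNReal.measurable_ofReal.comp Real.measurable_log.neg)
  have hQm : ∀ k, Measurable (Q P k) :=
    fun k => (Q_measurable P k).mono (pastAlg_le k) le_rfl
  have hLLmeas : ∀ k, Measurable (logLossOf (Q P k)) := by
    intro k
    unfold logLossOf
    exact Measurable.ite hA (hnegLog_meas.comp (hQm k))
      (hnegLog_meas.comp (measurable_const.sub (hQm k)))
  have hG'meas : Measurable G' :=
    Measurable.iSup fun k => Measurable.iSup fun _ => hLLmeas k
  have hae : G =ᵐ[P] G' := by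
    have : ∀ᵐ ω ∂P, ∀ k : ℕ, q (k + 1) ω = Q P (k + 1) ω :=
      ae_all_iff.mpr fun k => hq (k + 1) (Nat.succ_le_succ (Nat.zero_le k))
    filter_upwards [this] with ω hω
    refine iSup_congr fun k => iSup_congr fun hk1 => ?_
    obtain ⟨m, rfl⟩ : ∃ m, k = m + 1 := ⟨k - 1, (Nat.succ_pred_eq_of_pos hk1).symm⟩
    rw [logLossOf, logLossOf, hω m]
  have hsetae : ∀ c : ℝ≥0∞, P {ω | c ≤ G' ω} = P {ω | c ≤ G ω} := by
    intro c
    refine measure_congr ?_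
    filter_upwards [hae] with ω hω
    show (c ≤ G' ω) = (c ≤ G ω)
    rw [hω]
  have hlin : ∫⁻ ω, G ω ∂P = ∫⁻ ω, G' ω ∂P := lintegral_congr_ae hae
  have hsetmeas : ∀ n : ℕ, MeasurableSet {ω | (n : ℝ≥0∞) < G' ω} :=
    fun n => measurableSet_lt measurable_const hG'meas
  have step1 : ∫⁻ ω, G' ω ∂P ≤ ∑' n : ℕ, P {ω | (n : ℝ≥0∞) < G' ω} := by
    calc ∫⁻ ω, G' ω ∂P
        ≤ ∫⁻ ω, ∑' n : ℕ, ({ω' | (n : ℝ≥0∞) < G' ω'}.indicator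
            (fun _ => (1 : ℝ≥0∞))) ω ∂P := by
          refine lintegral_mono fun ω => ?_
          refine le_trans (le_tsum_indicator (G' ω)) (le_of_eq (tsum_congr fun n => ?_))
          simp [Set.indicator_apply]
      _ = ∑' n : ℕ, ∫⁻ ω, ({ω' | (n : ℝ≥0∞) < G' ω'}.indicator
            (fun _ => (1 : ℝ≥0∞))) ω ∂P :=
          lintegral_tsum fun n => (measurable_const.indicator (hsetmeas n)).aemeasurable
      _ = ∑' n : ℕ, P {ω | (n : ℝ≥0∞) < G' ω} := by
          refine tsum_congr fun n => ?_
          rw [lintegral_indicator_const (hsetmeas n) 1, one_mul]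
  have step2 : ∀ n : ℕ, P {ω | (n : ℝ≥0∞) < G' ω} ≤ ENNReal.ofReal (2 * Real.exp (-(n : ℝ))) := by
    intro n
    cases n with
    | zero =>
      refine le_trans prob_le_one ?_
      simp only [Nat.cast_zero, neg_zero, Real.exp_zero, mul_one]
      rw [show ((2:ℝ)) = (1:ℝ) + 1 by norm_num, ENNReal.ofReal_add one_pos.le one_pos.le]
      simp
    | succ m =>
      have hpos : (0 : ℝ) < ((m + 1 : ℕ) : ℝ) := by positivity
      have hsub : {ω | ((m + 1 : ℕ) : ℝ≥0∞) < G' ω}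
          ⊆ {ω | ENNReal.ofReal ((m + 1 : ℕ) : ℝ) ≤ G' ω} := by
        intro ω hω
        simp only [Set.mem_setOf_eq, ENNReal.ofReal_natCast]
        exact le_of_lt hω
      calc P {ω | ((m + 1 : ℕ) : ℝ≥0∞) < G' ω}
          ≤ P {ω | ENNReal.ofReal ((m + 1 : ℕ) : ℝ) ≤ G' ω} := measure_mono hsub
        _ = P {ω | ENNReal.ofReal ((m + 1 : ℕ) : ℝ) ≤ G ω} := hsetae _
        _ ≤ ENNReal.ofReal (2 * Real.exp (-((m + 1 : ℕ) : ℝ))) := part1 _ hpos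
  have hsummable : Summable (fun n : ℕ => 2 * Real.exp (-(n : ℝ))) := by
    have : (fun n : ℕ => 2 * Real.exp (-(n : ℝ))) = fun n : ℕ => 2 * (Real.exp (-1)) ^ n := by
      funext n
      rw [← Real.exp_nat_mul]
      ring_nf
    rw [this]
    exact (summable_geometric_of_lt_one (Real.exp_pos _).le
      (Real.exp_lt_one_iff.mpr (by norm_num))).mul_left 2
  have hsum_ne_top : (∑' n : ℕ, ENNReal.ofReal (2 * Real.exp (-(n : ℝ)))) ≠ ⊤ := by
    rw [← ENNReal.ofReal_tsum_of_nonneg (fun n => by positivity) hsummable]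
    exact ENNReal.ofReal_ne_top
  refine ne_top_of_le_ne_top hsum_ne_top ?_
  calc ∫⁻ ω, G ω ∂P = ∫⁻ ω, G' ω ∂P := hlin
    _ ≤ ∑' n : ℕ, P {ω | (n : ℝ≥0∞) < G' ω} := step1
    _ ≤ ∑' n : ℕ, ENNReal.ofReal (2 * Real.exp (-(n : ℝ))) := ENNReal.tsum_le_tsum step2

end
end
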